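/- arXiv:2312.13588 — 11 statements merged into one kernel-verified Lean document; each statement's English description precedes it below -/
import Mathlib

section
/- For every n ≡ 2 (mod 4) with n ≥ 6, the maximum size of a family of subsets of [n] satisfying the (1,1,0)-intersection pattern modulo 2 equals n/2 + 1; that is, f_{(1,1,0)}(n) = n/2 + 1. -/
open Finset

/-- A family `F` of subsets of `Fin n` satisfies the `α`-intersection pattern modulo 2
(for `α = (α_1, …, α_k)`, here 0-indexed: `α i` governs intersections of `i+1` distinct sets)
if every subfamily of `i+1` distinct sets has intersection of size `≡ α_i (mod 2)`. -/
def SatisfiesPattern (n k : ℕ) (α : Fin k → ZMod 2) (F : Finset (Finset (Fin n))) : Prop :=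
  ∀ i : Fin k, ∀ S : Finset (Finset (Fin n)), S ⊆ F → S.card = i.val + 1 →
    ((S.inf id).card : ZMod 2) = α i

/-- `maxPattern k α n` is `f_α(n)`, the maximum size of a family of subsets of `[n]`
satisfying the `α`-intersection pattern modulo 2. -/
noncomputable def maxPattern (k : ℕ) (α : Fin k → ZMod 2) (n : ℕ) : ℕ :=
  sSup {m : ℕ | ∃ F : Finset (Finset (Fin n)), SatisfiesPattern n k α F ∧ F.card = m}

lemma zmod2_odd {k : ℕ} (h : k % 2 = 1) : (k : ZMod 2) = 1 := by
  obtain ⟨t, rfl⟩ : ∃ t, k = 2*t+1 := ⟨k/2, by omega⟩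
  push_cast
  rw [show ((2:ZMod 2)) = 0 from rfl]
  ring

lemma zmod2_even {k : ℕ} (h : k % 2 = 0) : (k : ZMod 2) = 0 := by
  obtain ⟨t, rfl⟩ : ∃ t, k = 2*t := ⟨k/2, by omega⟩
  push_cast
  rw [show ((2:ZMod 2)) = 0 from rfl]
  ring

lemma card_le_of_dual {ι σ : Type*} [Fintype ι] [Fintype σ] [DecidableEq ι]
    (v d : ι → σ → ZMod 2)
    (h : ∀ i j, ∑ x, d i x * v j x = if i = j then 1 else 0) :
    Fintype.card ι ≤ Fintype.card σ := by
  have hli : LinearIndependent (ZMod 2) v := by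
    rw [Fintype.linearIndependent_iff]
    intro g hg i
    have h0 := congrArg (fun u : σ → ZMod 2 => ∑ x, d i x * u x) hg
    simp only [Finset.sum_apply, Pi.smul_apply, smul_eq_mul] at h0
    have : ∑ x, d i x * (∑ j, g j * v j x) = g i := by
      simp_rw [Finset.mul_sum]
      rw [Finset.sum_comm]
      have : ∀ j, ∑ x, d i x * (g j * v j x) = g j * (if i = j then 1 else 0) := by
        intro j
        rw [← h i j, Finset.mul_sum]
        congr 1; ext x; ring
      simp_rw [this]
      simp [Finset.sum_ite_eq, eq_comm]
    rw [this] at h0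
    simpa using h0
  simpa [Module.finrank_fintype_fun_eq_card] using hli.fintype_card_le_finrank

lemma pair_sum (n : ℕ) (s A B : Finset (Fin n)) :
    ∑ x : {y // y ∈ s}, (if ↑x ∈ A then (1:ZMod 2) else 0) * (if ↑x ∈ B then 1 else 0)
      = ((s ∩ A ∩ B).card : ZMod 2) := by
  rw [Finset.sum_coe_sort s (fun y => (if y ∈ A then (1:ZMod 2) else 0) * (if y ∈ B then 1 else 0))]
  have : ∀ y ∈ s, (if y ∈ A then (1:ZMod 2) else 0) * (if y ∈ B then 1 else 0)
      = if y ∈ A ∧ y ∈ B then 1 else 0 := by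
    intro y _; split_ifs with h1 h2 h3 <;> simp_all
  rw [Finset.sum_congr rfl this, Finset.sum_boole]
  congr 2
  ext y; simp [Finset.mem_inter, and_assoc]

lemma h1' {n : ℕ} {F : Finset (Finset (Fin n))} (hF : SatisfiesPattern n 3 ![1,1,0] F)
    {A : Finset (Fin n)} (hA : A ∈ F) : (A.card : ZMod 2) = 1 := by
  have := hF ⟨0, by omega⟩ {A} (by simpa using hA) (by simp)
  simpa using this

lemma h2' {n : ℕ} {F : Finset (Finset (Fin n))} (hF : SatisfiesPattern n 3 ![1,1,0] F)
    {A B : Finset (Fin n)} (hA : A ∈ F) (hB : B ∈ F) (hAB : A ≠ B) :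
    (((A ∩ B).card : ZMod 2)) = 1 := by
  have := hF ⟨1, by omega⟩ {A, B} (by simp [Finset.insert_subset_iff, hA, hB])
    (by rw [Finset.card_insert_of_notMem (by simpa using hAB)]; simp)
  simpa using this

lemma h3' {n : ℕ} {F : Finset (Finset (Fin n))} (hF : SatisfiesPattern n 3 ![1,1,0] F)
    {A B C : Finset (Fin n)} (hA : A ∈ F) (hB : B ∈ F) (hC : C ∈ F)
    (hAB : A ≠ B) (hAC : A ≠ C) (hBC : B ≠ C) :
    (((A ∩ B ∩ C).card : ZMod 2)) = 0 := by
  have := hF ⟨2, by omega⟩ {A, B, C}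
    (by simp [Finset.insert_subset_iff, hA, hB, hC])
    (by rw [Finset.card_insert_of_notMem (by simp [hAB, hAC]),
            Finset.card_insert_of_notMem (by simpa using hBC)]; simp)
  simpa [Finset.inter_assoc] using this

lemma upper {n : ℕ} (hn2 : n % 2 = 0) (h6 : 6 ≤ n) {F : Finset (Finset (Fin n))}
    (hF : SatisfiesPattern n 3 ![1,1,0] F) : F.card ≤ n/2 + 1 := by
  by_cases hN : F.card ≤ 3
  · omega
  push_neg at hN
  obtain ⟨F1, hF1⟩ : F.Nonempty := Finset.card_pos.mp (by omega)
  set G := F.erase F1 with hGdef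
  have hGcard : G.card = F.card - 1 := Finset.card_erase_of_mem hF1
  obtain ⟨A0, hA0⟩ : G.Nonempty := Finset.card_pos.mp (by omega)
  have memG : ∀ {A}, A ∈ G → A ∈ F ∧ A ≠ F1 := by
    intro A hA
    exact ⟨Finset.mem_of_mem_erase hA, (Finset.mem_erase.mp hA).1⟩
  have claim1 : G.card ≤ F1.card := by
    have := card_le_of_dual (ι := {A // A ∈ G}) (σ := {x // x ∈ F1})
      (fun A x => if ↑x ∈ (A : Finset (Fin n)) then 1 else 0)
      (fun A x => if ↑x ∈ (A : Finset (Fin n)) then 1 else 0) ?_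
    · simpa [Fintype.card_coe] using this
    intro i j
    rw [pair_sum]
    obtain ⟨hiF, hine⟩ := memG i.2
    obtain ⟨hjF, hjne⟩ := memG j.2
    by_cases hij : i = j
    · subst hij
      rw [if_pos rfl, Finset.inter_assoc, Finset.inter_self]
      exact h2' hF hF1 hiF hine.symm
    · have hne : (i : Finset (Fin n)) ≠ j := fun h => hij (Subtype.ext h)
      rw [if_neg hij]
      exact h3' hF hF1 hiF hjF hine.symm hjne.symm hne
  have keyP : ∀ A B : Finset (Fin n), A ∈ G → B ∈ G →
      ((F1ᶜ ∩ A ∩ B).card : ZMod 2) = if A = B then 0 else 1 := by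
    intro A B hA hB
    obtain ⟨hAF, hAne⟩ := memG hA
    obtain ⟨hBF, hBne⟩ := memG hB
    have hEq : F1ᶜ ∩ A ∩ B = (A ∩ B) \ F1 := by
      ext x; simp [Finset.mem_sdiff, Finset.mem_inter]; tauto
    have hsplit : ((A ∩ B) ∩ F1).card + ((A ∩ B) \ F1).card = (A ∩ B).card :=
      Finset.card_inter_add_card_sdiff _ _
    have hcast := congrArg (fun k : ℕ => (k : ZMod 2)) hsplit
    push_cast at hcast
    rw [hEq]
    by_cases hAB : A = B
    · subst hAB
      rw [if_pos rfl]
      have e1 : ((A ∩ A ∩ F1).card : ZMod 2) = 1 := by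
        rw [Finset.inter_self, Finset.inter_comm]
        exact h2' hF hF1 hAF hAne.symm
      have e2 : (((A ∩ A).card : ℕ) : ZMod 2) = 1 := by
        rw [Finset.inter_self]; exact h1' hF hAF
      rw [e1, e2] at hcast
      linear_combination hcast
    · rw [if_neg hAB]
      have e1 : ((A ∩ B ∩ F1).card : ZMod 2) = 0 := by
        rw [Finset.inter_comm (A ∩ B) F1, ← Finset.inter_assoc]
        exact h3' hF hF1 hAF hBF hAne.symm hBne.symm hAB
      have e2 : (((A ∩ B).card : ℕ) : ZMod 2) = 1 := h2' hF hAF hBF hAB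
      rw [e1, e2] at hcast
      linear_combination hcast
  have claim2 : (G.erase A0).card ≤ n - F1.card := by
    have := card_le_of_dual (ι := {A // A ∈ G.erase A0}) (σ := {x // x ∈ F1ᶜ})
      (fun A x => if ↑x ∈ (A : Finset (Fin n)) then 1 else 0)
      (fun A x => (if ↑x ∈ (A : Finset (Fin n)) then 1 else 0) + (if ↑x ∈ A0 then 1 else 0)) ?_
    · rwa [Fintype.card_coe, Fintype.card_coe, Finset.card_compl, Fintype.card_fin] at this
    intro i j
    have memE : ∀ {A}, A ∈ G.erase A0 → A ∈ G ∧ A ≠ A0 := by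
      intro A hA
      exact ⟨Finset.mem_of_mem_erase hA, (Finset.mem_erase.mp hA).1⟩
    obtain ⟨hiG, hine⟩ := memE i.2
    obtain ⟨hjG, hjne⟩ := memE j.2
    have expand : ∑ x : {y // y ∈ F1ᶜ},
        ((if ↑x ∈ (i : Finset (Fin n)) then (1:ZMod 2) else 0) + (if ↑x ∈ A0 then 1 else 0))
          * (if ↑x ∈ (j : Finset (Fin n)) then 1 else 0)
        = ((F1ᶜ ∩ (i : Finset (Fin n)) ∩ j).card : ZMod 2) + ((F1ᶜ ∩ A0 ∩ j).card : ZMod 2) := by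
      rw [← pair_sum, ← pair_sum, ← Finset.sum_add_distrib]
      congr 1; ext x; ring
    rw [expand, keyP _ _ hiG hjG, keyP _ _ hA0 hjG, if_neg (Ne.symm hjne)]
    by_cases hij : i = j
    · rw [if_pos (by rw [hij]), if_pos hij]; ring
    · rw [if_neg (fun h => hij (Subtype.ext h)), if_neg hij]; decide
  have hF1n : F1.card ≤ n := by
    simpa using Finset.card_le_card (Finset.subset_univ F1)
  have hGE : (G.erase A0).card = G.card - 1 := Finset.card_erase_of_mem hA0
  omega


section Constr
variable (n m : ℕ) (h : n = 2*m)

def aa (i : Fin m) : Fin n := ⟨2*i.val, by have := i.isLt; omega⟩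
def bb (i : Fin m) : Fin n := ⟨2*i.val+1, by have := i.isLt; omega⟩
def Atp : Finset (Fin n) := univ.image (aa n m h)
def Ee (j : Fin m) : Finset (Fin n) :=
  insert (aa n m h j) ((univ.erase j).image (bb n m h))
def Fam : Finset (Finset (Fin n)) := insert (Atp n m h) (univ.image (Ee n m h))

variable {n m}

lemma aa_inj : Function.Injective (aa n m h) := by
  intro i j e
  have := congrArg Fin.val e
  simp only [aa] at this
  exact Fin.ext (by omega)

lemma bb_inj : Function.Injective (bb n m h) := by
  intro i j e
  have := congrArg Fin.val e
  simp only [bb] at this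
  exact Fin.ext (by omega)

lemma aa_ne_bb (i j : Fin m) : aa n m h i ≠ bb n m h j := by
  intro e
  have := congrArg Fin.val e
  simp only [aa, bb] at this
  omega

lemma aa_notMem_imagebb (j : Fin m) (s : Finset (Fin m)) :
    aa n m h j ∉ s.image (bb n m h) := by
  simp only [mem_image, not_exists]
  rintro i ⟨-, e⟩
  exact aa_ne_bb h j i e.symm

lemma bb_notMem_Atp (i : Fin m) : bb n m h i ∉ Atp n m h := by
  simp only [Atp, mem_image, not_exists]
  rintro j ⟨-, e⟩
  exact aa_ne_bb h j i e

lemma aa_mem_Ee (i j : Fin m) : aa n m h i ∈ Ee n m h j ↔ i = j := by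
  simp only [Ee, mem_insert]
  constructor
  · rintro (e | hmem)
    · exact aa_inj h e
    · exact absurd hmem (aa_notMem_imagebb h i _)
  · rintro rfl; exact Or.inl rfl

lemma bb_mem_Ee (i j : Fin m) : bb n m h i ∈ Ee n m h j ↔ i ≠ j := by
  simp only [Ee, mem_insert, mem_image, mem_erase, mem_univ, and_true]
  constructor
  · rintro (e | ⟨k, hk, e⟩)
    · exact absurd e.symm (aa_ne_bb h j i)
    · rintro rfl; exact hk (bb_inj h e)
  · intro hne
    exact Or.inr ⟨i, hne, rfl⟩

lemma imagebb_inter_Ee (s : Finset (Fin m)) (j : Fin m) :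
    (s.image (bb n m h)) ∩ Ee n m h j = (s.erase j).image (bb n m h) := by
  ext x
  simp only [mem_inter, mem_image, mem_erase]
  constructor
  · rintro ⟨⟨i, hi, rfl⟩, hx⟩
    exact ⟨i, ⟨(bb_mem_Ee h i j).mp hx, hi⟩, rfl⟩
  · rintro ⟨i, ⟨hij, hi⟩, rfl⟩
    exact ⟨⟨i, hi, rfl⟩, (bb_mem_Ee h i j).mpr hij⟩

lemma imagebb_inter_Atp (s : Finset (Fin m)) :
    (s.image (bb n m h)) ∩ Atp n m h = ∅ := by
  ext x
  simp only [mem_inter, mem_image, notMem_empty, iff_false, not_and]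
  rintro ⟨i, hi, rfl⟩
  exact bb_notMem_Atp h i

lemma Ee_inter_Ee {j j' : Fin m} (hjj : j ≠ j') :
    Ee n m h j ∩ Ee n m h j' = ((univ.erase j).erase j').image (bb n m h) := by
  have h1 : aa n m h j ∉ Ee n m h j' := by
    rw [aa_mem_Ee]; exact hjj
  rw [show Ee n m h j = insert (aa n m h j) ((univ.erase j).image (bb n m h)) from rfl,
    Finset.insert_inter_of_notMem h1, imagebb_inter_Ee]

lemma Ee_inter_Atp (j : Fin m) :
    Ee n m h j ∩ Atp n m h = {aa n m h j} := by
  have h1 : aa n m h j ∈ Atp n m h := mem_image_of_mem _ (mem_univ j)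
  rw [show Ee n m h j = insert (aa n m h j) ((univ.erase j).image (bb n m h)) from rfl,
    Finset.insert_inter_of_mem h1, imagebb_inter_Atp]
  rfl

lemma card_Atp : (Atp n m h).card = m := by
  rw [Atp, Finset.card_image_of_injective _ (aa_inj h), card_univ, Fintype.card_fin]

lemma card_Ee (j : Fin m) : (Ee n m h j).card = m - 1 + 1 := by
  rw [Ee, Finset.card_insert_of_notMem (aa_notMem_imagebb h j _),
    Finset.card_image_of_injective _ (bb_inj h), Finset.card_erase_of_mem (mem_univ j),
    card_univ, Fintype.card_fin]

lemma Ee_injective : Function.Injective (Ee n m h) := by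
  intro j j' e
  have : aa n m h j ∈ Ee n m h j' := by
    rw [← e, aa_mem_Ee]
  rwa [aa_mem_Ee] at this

lemma Atp_ne_Ee (hm : 2 ≤ m) (j : Fin m) : Atp n m h ≠ Ee n m h j := by
  intro e
  have : ∃ i : Fin m, i ≠ j := by
    by_cases hj : j.val = 0
    · exact ⟨⟨1, by omega⟩, by simp only [ne_eq, Fin.ext_iff]; omega⟩
    · exact ⟨⟨0, by omega⟩, by simp only [ne_eq, Fin.ext_iff]; omega⟩
  obtain ⟨i, hi⟩ := this
  have : bb n m h i ∈ Atp n m h := by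
    rw [e, bb_mem_Ee]; exact hi
  exact bb_notMem_Atp h i this

lemma card_Fam (hm : 2 ≤ m) : (Fam n m h).card = m + 1 := by
  rw [Fam, Finset.card_insert_of_notMem, Finset.card_image_of_injective _ (Ee_injective h),
    card_univ, Fintype.card_fin]
  simp only [mem_image, not_exists]
  rintro j ⟨-, e⟩
  exact Atp_ne_Ee h hm j e.symm

end Constr

section Constr2
variable {n m : ℕ} (h : n = 2*m)


lemma mem_Fam_iff {X : Finset (Fin n)} :
    X ∈ Fam n m h ↔ X = Atp n m h ∨ ∃ j, X = Ee n m h j := by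
  simp only [Fam, mem_insert, mem_image, mem_univ, true_and]
  constructor
  · rintro (rfl | ⟨j, rfl⟩)
    · exact Or.inl rfl
    · exact Or.inr ⟨j, rfl⟩
  · rintro (rfl | ⟨j, rfl⟩)
    · exact Or.inl rfl
    · exact Or.inr ⟨j, rfl⟩

lemma pairCard (hm1 : m % 2 = 1) (hm3 : 3 ≤ m) {X Y : Finset (Fin n)}
    (hX : X ∈ Fam n m h) (hY : Y ∈ Fam n m h) (hXY : X ≠ Y) :
    ((X ∩ Y).card : ZMod 2) = 1 := by
  rw [mem_Fam_iff] at hX hY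
  have cardEE : ∀ j j' : Fin m, j ≠ j' → (((Ee n m h j ∩ Ee n m h j').card : ZMod 2)) = 1 := by
    intro j j' hjj
    rw [Ee_inter_Ee h hjj, Finset.card_image_of_injective _ (bb_inj h),
      Finset.card_erase_of_mem (mem_erase.mpr ⟨Ne.symm hjj, mem_univ _⟩),
      Finset.card_erase_of_mem (mem_univ _), card_univ, Fintype.card_fin]
    exact zmod2_odd (by omega)
  rcases hX with rfl | ⟨j, rfl⟩ <;> rcases hY with rfl | ⟨j', rfl⟩
  · exact absurd rfl hXY
  · rw [Finset.inter_comm, Ee_inter_Atp h, Finset.card_singleton]; rfl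
  · rw [Ee_inter_Atp h, Finset.card_singleton]; rfl
  · exact cardEE j j' (fun e => hXY (by rw [e]))

lemma tripleCard (hm1 : m % 2 = 1) (hm3 : 3 ≤ m) {X Y Z : Finset (Fin n)}
    (hX : X ∈ Fam n m h) (hY : Y ∈ Fam n m h) (hZ : Z ∈ Fam n m h)
    (hXY : X ≠ Y) (hXZ : X ≠ Z) (hYZ : Y ≠ Z) :
    (((X ∩ (Y ∩ Z)).card : ZMod 2)) = 0 := by
  rw [mem_Fam_iff] at hX hY hZ
  have cardEEE : ∀ j j' j'' : Fin m, j ≠ j' → j ≠ j'' → j' ≠ j'' →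
      (((Ee n m h j ∩ (Ee n m h j' ∩ Ee n m h j'')).card : ZMod 2)) = 0 := by
    intro j j' j'' h12 h13 h23
    rw [← Finset.inter_assoc, Ee_inter_Ee h h12, imagebb_inter_Ee h,
      Finset.card_image_of_injective _ (bb_inj h),
      Finset.card_erase_of_mem (mem_erase.mpr ⟨Ne.symm h23,
        mem_erase.mpr ⟨Ne.symm h13, mem_univ _⟩⟩),
      Finset.card_erase_of_mem (mem_erase.mpr ⟨Ne.symm h12, mem_univ _⟩),
      Finset.card_erase_of_mem (mem_univ _), card_univ, Fintype.card_fin]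
    exact zmod2_even (by omega)
  have cardEEA : ∀ j j' : Fin m, j ≠ j' →
      (((Ee n m h j ∩ Ee n m h j' ∩ Atp n m h).card : ZMod 2)) = 0 := by
    intro j j' hjj
    rw [Ee_inter_Ee h hjj, imagebb_inter_Atp h, Finset.card_empty]; rfl
  rcases hX with rfl | ⟨j1, rfl⟩ <;> rcases hY with rfl | ⟨j2, rfl⟩ <;>
    rcases hZ with rfl | ⟨j3, rfl⟩
  · exact absurd rfl hXY
  · exact absurd rfl hXY
  · exact absurd rfl hXZ
  · -- Atp, Ee j2, Ee j3
    rw [Finset.inter_comm]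
    exact cardEEA j2 j3 (fun e => hYZ (by rw [e]))
  · exact absurd rfl hYZ
  · -- Ee j1, Atp, Ee j3
    rw [Finset.inter_comm (Atp n m h), ← Finset.inter_assoc]
    exact cardEEA j1 j3 (fun e => hXZ (by rw [e]))
  · -- Ee j1, Ee j2, Atp
    rw [← Finset.inter_assoc]
    exact cardEEA j1 j2 (fun e => hXY (by rw [e]))
  · exact cardEEE j1 j2 j3 (fun e => hXY (by rw [e])) (fun e => hXZ (by rw [e]))
      (fun e => hYZ (by rw [e]))

lemma satFam (hm1 : m % 2 = 1) (hm3 : 3 ≤ m) :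
    SatisfiesPattern n 3 ![1,1,0] (Fam n m h) := by
  rintro ⟨iv, hiv⟩ S hS hcard
  interval_cases iv
  · obtain ⟨X, rfl⟩ := Finset.card_eq_one.mp hcard
    have hX : X ∈ Fam n m h := hS (mem_singleton_self X)
    rw [mem_Fam_iff] at hX
    have : (({X} : Finset (Finset (Fin n))).inf id) = X := by simp
    rw [this]
    have hc : (X.card : ZMod 2) = 1 := by
      rcases hX with rfl | ⟨j, rfl⟩
      · rw [card_Atp h]; exact zmod2_odd hm1
      · rw [card_Ee h]; exact zmod2_odd (by omega)
    simpa using hc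
  · obtain ⟨X, Y, hXY, rfl⟩ := Finset.card_eq_two.mp hcard
    have hX : X ∈ Fam n m h := hS (by simp)
    have hY : Y ∈ Fam n m h := hS (by simp)
    have : (({X, Y} : Finset (Finset (Fin n))).inf id) = X ∩ Y := by
      simp [Finset.inf_insert, Finset.inf_eq_inter]
    rw [this]
    simpa using pairCard h hm1 hm3 hX hY hXY
  · obtain ⟨X, Y, Z, hXY, hXZ, hYZ, rfl⟩ := Finset.card_eq_three.mp hcard
    have hX : X ∈ Fam n m h := hS (by simp)
    have hY : Y ∈ Fam n m h := hS (by simp)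
    have hZ : Z ∈ Fam n m h := hS (by simp)
    have : (({X, Y, Z} : Finset (Finset (Fin n))).inf id) = X ∩ (Y ∩ Z) := by
      simp [Finset.inf_insert, Finset.inf_eq_inter]
    rw [this]
    simpa using tripleCard h hm1 hm3 hX hY hZ hXY hXZ hYZ

end Constr2

theorem f_110_mod4_2 (n : ℕ) (h4 : n % 4 = 2) (h6 : 6 ≤ n) :
    maxPattern 3 ![1, 1, 0] n = n / 2 + 1 := by
  have hnm : n = 2 * (n / 2) := by omega
  have hm1 : (n / 2) % 2 = 1 := by omega
  have hm3 : 3 ≤ n / 2 := by omega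
  have hmem : (n / 2 + 1) ∈ {k : ℕ | ∃ F : Finset (Finset (Fin n)),
      SatisfiesPattern n 3 ![1, 1, 0] F ∧ F.card = k} :=
    ⟨Fam n (n / 2) hnm, satFam hnm hm1 hm3, by rw [card_Fam hnm (by omega)]⟩
  have hub : ∀ k ∈ {k : ℕ | ∃ F : Finset (Finset (Fin n)),
      SatisfiesPattern n 3 ![1, 1, 0] F ∧ F.card = k}, k ≤ n / 2 + 1 := by
    rintro k ⟨F, hSat, rfl⟩
    exact upper (by omega) h6 hSat
  rw [maxPattern]
  exact le_antisymm (csSup_le ⟨_, hmem⟩ hub) (le_csSup ⟨n / 2 + 1, hub⟩ hmem)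
end

section
/- For every n ≡ 3 (mod 4) with n ≥ 7, the maximum size of a family of subsets of [n] satisfying the (0,0,1)-intersection pattern modulo 2 equals (n-1)/2 + 1; that is, f_{(0,0,1)}(n) = (n+1)/2. -/
open Finset

set_option linter.unusedSectionVars false
set_option linter.unusedVariables false

namespace F001
open Matrix
variable {n : ℕ}

def chi (A : Finset (Fin n)) (j : Fin n) : ZMod 2 := if j ∈ A then 1 else 0

lemma zmod2_cases (z : ZMod 2) : z = 0 ∨ z = 1 := by revert z; decide

lemma sum_chi (D : Finset (Fin n)) : ∑ j, chi D j = (D.card : ZMod 2) := by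
  unfold chi
  rw [Finset.sum_ite_mem, Finset.univ_inter, Finset.sum_const]
  simp

lemma sum_chi3 (A B C : Finset (Fin n)) :
    ∑ j, chi A j * chi B j * chi C j = (((A ∩ B ∩ C).card : ZMod 2)) := by
  rw [← sum_chi (A ∩ B ∩ C)]
  refine Finset.sum_congr rfl fun j _ => ?_
  unfold chi
  by_cases hA : j ∈ A <;> by_cases hB : j ∈ B <;> by_cases hC : j ∈ C <;>
    simp [hA, hB, hC, Finset.mem_inter]

section Pattern
variable {F : Finset (Finset (Fin n))} (hF : SatisfiesPattern n 3 ![0,0,1] F)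
include hF

lemma p1 {A : Finset (Fin n)} (hA : A ∈ F) : ((A.card : ZMod 2)) = 0 := by
  have := hF 0 {A} (by simpa) (by simp)
  simpa using this

lemma p2 {A B : Finset (Fin n)} (hA : A ∈ F) (hB : B ∈ F) (hAB : A ≠ B) :
    (((A ∩ B).card : ZMod 2)) = 0 := by
  have := hF 1 {A, B} (by simp [Finset.insert_subset_iff, hA, hB])
    (by rw [Finset.card_pair hAB]; rfl)
  simpa [Finset.inf_insert] using this

lemma p3 {A B C : Finset (Fin n)} (hA : A ∈ F) (hB : B ∈ F) (hC : C ∈ F)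
    (hAB : A ≠ B) (hAC : A ≠ C) (hBC : B ≠ C) :
    (((A ∩ B ∩ C).card : ZMod 2)) = 1 := by
  have hcard : ({A, B, C} : Finset (Finset (Fin n))).card = 3 := by
    rw [Finset.card_insert_of_notMem (by simp [hAB, hAC]),
      Finset.card_pair hBC]
  have := hF 2 {A, B, C} (by simp [Finset.insert_subset_iff, hA, hB, hC])
    (by rw [hcard]; rfl)
  simpa [Finset.inf_insert, Finset.inter_assoc] using this

/-- Key lemma: if the characteristic vectors of `S ⊆ F` sum to zero, then
`|S \ {g,k}|` is even, for any distinct `g k ∈ F`. -/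
lemma key {g k : Finset (Fin n)} (hg : g ∈ F) (hk : k ∈ F) (hgk : g ≠ k)
    {S : Finset (Finset (Fin n))} (hS : S ⊆ F)
    (hsum : ∀ j, ∑ A ∈ S, chi A j = 0) :
    (((S \ {g, k}).card : ZMod 2)) = 0 := by
  have h0 : (0 : ZMod 2) = ∑ A ∈ S, ∑ j, chi g j * chi k j * chi A j := by
    rw [Finset.sum_comm]
    have : ∀ j : Fin n, ∑ A ∈ S, chi g j * chi k j * chi A j = 0 := by
      intro j
      rw [← Finset.mul_sum, hsum j, mul_zero]
    simp [this]
  have h1 : ∀ A ∈ S, (∑ j, chi g j * chi k j * chi A j)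
      = (if A = g ∨ A = k then 0 else 1) := by
    intro A hA
    rw [sum_chi3]
    by_cases hAg : A = g
    · subst hAg
      have : A ∩ k ∩ A = A ∩ k := by ext x; simp [Finset.mem_inter]; tauto
      rw [this, if_pos (Or.inl rfl)]
      exact p2 hF hg hk hgk
    · by_cases hAk : A = k
      · subst hAk
        have : g ∩ A ∩ A = g ∩ A := by ext x; simp [Finset.mem_inter]
        rw [this, if_pos (Or.inr rfl)]
        exact p2 hF hg hk hgk
      · rw [if_neg (by tauto)]
        exact p3 hF hg hk (hS hA) hgk (Ne.symm hAg) (Ne.symm hAk)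
  rw [Finset.sum_congr rfl h1] at h0
  rw [Finset.sum_ite, Finset.sum_const, Finset.sum_const] at h0
  have h2 : S \ {g, k} = S.filter (fun A => ¬(A = g ∨ A = k)) := by
    ext A; simp [Finset.mem_sdiff, Finset.mem_filter]
  rw [h2]
  simpa using h0.symm

end Pattern

lemma natCast_zmod2_zero {a : ℕ} (h : ((a : ℕ) : ZMod 2) = 0) : a % 2 = 0 := by
  have := (ZMod.natCast_eq_zero_iff a 2).mp h
  omega

lemma natCast_zmod2_one {a : ℕ} (h : ((a : ℕ) : ZMod 2) = 1) : a % 2 = 1 := by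
  by_contra hcon
  have h0 : a % 2 = 0 := by omega
  have : ((a : ℕ) : ZMod 2) = 0 := by
    rw [(ZMod.natCast_eq_zero_iff a 2)]
    omega
  rw [this] at h
  exact absurd h (by decide)

section Pattern2
variable {F : Finset (Finset (Fin n))}

lemma zeroS (hF : SatisfiesPattern n 3 ![0,0,1] F) (hc : 4 < F.card)
    {f0 : Finset (Fin n)} (hf0 : f0 ∈ F) :
    ∀ S ⊆ F.erase f0, (∀ j, ∑ A ∈ S, chi A j = 0) → S = ∅ := by
  intro S hSsub hsum
  by_contra hne
  obtain ⟨g, hgS⟩ := Finset.nonempty_iff_ne_empty.mpr hne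
  have hgF : g ∈ F := Finset.mem_of_mem_erase (hSsub hgS)
  have hgf0 : g ≠ f0 := Finset.ne_of_mem_erase (hSsub hgS)
  have hf0S : f0 ∉ S := fun h => (Finset.ne_of_mem_erase (hSsub h)) rfl
  have hSF : S ⊆ F := hSsub.trans (Finset.erase_subset _ _)
  by_cases h2 : 2 ≤ S.card
  · -- |S| - 1 even from (g, f0)
    have C1 := key hF hgF hf0 hgf0 hSF hsum
    have e1 : S \ {g, f0} = S.erase g := by
      ext A
      simp only [Finset.mem_sdiff, Finset.mem_erase, Finset.mem_insert,
        Finset.mem_singleton]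
      constructor
      · rintro ⟨hA, hno⟩; exact ⟨fun h => hno (Or.inl h), hA⟩
      · rintro ⟨hAg, hA⟩
        exact ⟨hA, fun h => h.elim hAg (fun h' => hf0S (h' ▸ hA))⟩
    rw [e1, Finset.card_erase_of_mem hgS] at C1
    have hC1 := natCast_zmod2_zero C1
    -- |S| - 2 even from (g, g')
    obtain ⟨g', hg'⟩ : (S.erase g).Nonempty := by
      rw [← Finset.card_pos, Finset.card_erase_of_mem hgS]; omega
    have hg'S : g' ∈ S := Finset.mem_of_mem_erase hg'
    have hgg' : g ≠ g' := fun h => (Finset.ne_of_mem_erase hg') h.symm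
    have C2 := key hF hgF (hSF hg'S) hgg' hSF hsum
    have e2 : S \ {g, g'} = (S.erase g).erase g' := by
      ext A
      simp only [Finset.mem_sdiff, Finset.mem_erase, Finset.mem_insert,
        Finset.mem_singleton]
      tauto
    rw [e2, Finset.card_erase_of_mem hg', Finset.card_erase_of_mem hgS] at C2
    have hC2 := natCast_zmod2_zero C2
    omega
  · -- S = {g}
    have hScard : S.card = 1 := by
      have := Finset.card_pos.mpr ⟨g, hgS⟩; omega
    -- pick two elements of F distinct from g, f0
    obtain ⟨h1, hh1⟩ : ((F.erase f0).erase g).Nonempty := by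
      rw [← Finset.card_pos, Finset.card_erase_of_mem
        (Finset.mem_erase.mpr ⟨hgf0, hgF⟩), Finset.card_erase_of_mem hf0]
      omega
    obtain ⟨h2', hh2⟩ : (((F.erase f0).erase g).erase h1).Nonempty := by
      rw [← Finset.card_pos, Finset.card_erase_of_mem hh1,
        Finset.card_erase_of_mem (Finset.mem_erase.mpr ⟨hgf0, hgF⟩),
        Finset.card_erase_of_mem hf0]
      omega
    have hh1F : h1 ∈ F := Finset.mem_of_mem_erase (Finset.mem_of_mem_erase hh1)
    have hh2F : h2' ∈ F :=
      Finset.mem_of_mem_erase (Finset.mem_of_mem_erase (Finset.mem_of_mem_erase hh2))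
    have h12 : h1 ≠ h2' := fun h => (Finset.ne_of_mem_erase hh2) h.symm
    have hgh1 : g ≠ h1 := fun h => (Finset.ne_of_mem_erase hh1) h.symm
    have hgh2 : g ≠ h2' := fun h =>
      (Finset.ne_of_mem_erase (Finset.mem_of_mem_erase hh2)) h.symm
    have C3 := key hF hh1F hh2F h12 hSF hsum
    have e3 : S \ {h1, h2'} = S := by
      apply Finset.sdiff_eq_self_of_disjoint
      rw [Finset.disjoint_left]
      intro a haS
      have : a = g := by
        obtain ⟨b, hb⟩ := Finset.card_eq_one.mp hScard
        rw [hb] at haS hgS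
        simp only [Finset.mem_singleton] at haS hgS
        rw [haS, hgS]
      simp only [Finset.mem_insert, Finset.mem_singleton, this]
      push_neg
      exact ⟨hgh1, hgh2⟩
    rw [e3, hScard, Nat.cast_one] at C3
    exact absurd C3 (by decide)


open Module in
lemma card_le (hF : SatisfiesPattern n 3 ![0,0,1] F) (hn7 : 7 ≤ n) (hodd : n % 2 = 1) :
    F.card ≤ (n + 1) / 2 := by
  by_cases hcb : F.card ≤ 4
  · omega
  push_neg at hcb
  obtain ⟨f0, hf0⟩ : F.Nonempty := Finset.card_pos.mp (by omega)
  set s := F.erase f0 with hs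
  let M : Matrix ↥s (Fin n) (ZMod 2) := fun i j => chi (i : Finset (Fin n)) j
  have hmemF : ∀ i : ↥s, (i : Finset (Fin n)) ∈ F := fun i =>
    Finset.mem_of_mem_erase i.2
  have hMMT : M * Mᵀ = 0 := by
    ext i k
    rw [Matrix.mul_apply]
    simp only [Matrix.transpose_apply, Matrix.zero_apply]
    have hrw : ∀ j, M i j * M k j = chi (↑i) j * chi (↑k) j * chi (↑k) j := by
      intro j
      show chi (↑i) j * chi (↑k) j = _
      unfold chi
      by_cases h : j ∈ (k : Finset (Fin n)) <;> simp [h]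
    rw [Finset.sum_congr rfl fun j _ => hrw j, sum_chi3]
    by_cases hik : i = k
    · subst hik
      have : (↑i ∩ ↑i ∩ ↑i : Finset (Fin n)) = ↑i := by simp
      rw [this]
      exact p1 hF (hmemF i)
    · have : (↑i ∩ ↑k ∩ ↑k : Finset (Fin n)) = ↑i ∩ ↑k := by
        ext x; simp [Finset.mem_inter]
      rw [this]
      exact p2 hF (hmemF i) (hmemF k) (fun h => hik (Subtype.ext h))
  have hker : LinearMap.ker (Mᵀ.mulVecLin) = ⊥ := by
    rw [LinearMap.ker_eq_bot']
    intro c hc0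
    set S : Finset (Finset (Fin n)) :=
      (s.attach.filter (fun i => c i = 1)).image Subtype.val with hSdef
    have hSsub : S ⊆ s := by
      intro A hA
      rw [hSdef, Finset.mem_image] at hA
      obtain ⟨i, _, rfl⟩ := hA
      exact i.2
    have hsum : ∀ j, ∑ A ∈ S, chi A j = 0 := by
      intro j
      rw [hSdef, Finset.sum_image (fun a _ b _ h => Subtype.val_injective h),
        Finset.sum_filter]
      have hterm : ∀ i ∈ s.attach, (if c i = 1 then chi (↑i) j else 0)
          = c i * chi (↑i) j := by
        intro i _
        rcases zmod2_cases (c i) with h | h <;> simp [h]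
      rw [Finset.sum_congr rfl hterm]
      have := congrFun hc0 j
      rw [Matrix.mulVecLin_apply] at this
      simp only [Matrix.mulVec, dotProduct, Matrix.transpose_apply,
        Pi.zero_apply] at this
      rw [← this, ← Finset.univ_eq_attach]
      exact Finset.sum_congr rfl fun i _ => mul_comm _ _
    have hS0 : S = ∅ := zeroS hF hcb hf0 S hSsub hsum
    funext i
    rcases zmod2_cases (c i) with h | h
    · exact h
    · exfalso
      have : (i : Finset (Fin n)) ∈ S := by
        rw [hSdef, Finset.mem_image]
        exact ⟨i, Finset.mem_filter.mpr ⟨Finset.mem_attach _ _, h⟩, rfl⟩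
      rw [hS0] at this
      exact absurd this (Finset.notMem_empty _)
  have hrankT : Mᵀ.rank = s.card := by
    have h1 := LinearMap.finrank_range_add_finrank_ker (Mᵀ.mulVecLin)
    rw [hker, finrank_bot, Module.finrank_fintype_fun_eq_card,
      Fintype.card_coe] at h1
    rw [Matrix.rank]
    omega
  have hrankM : M.rank = s.card := by rw [← Matrix.rank_transpose, hrankT]
  have hle : LinearMap.range (Mᵀ.mulVecLin) ≤ LinearMap.ker (M.mulVecLin) := by
    rintro x ⟨c, rfl⟩
    rw [LinearMap.mem_ker, Matrix.mulVecLin_apply, Matrix.mulVecLin_apply,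
      Matrix.mulVec_mulVec, hMMT, Matrix.zero_mulVec]
  have h2 := LinearMap.finrank_range_add_finrank_ker (M.mulVecLin)
  rw [Module.finrank_fintype_fun_eq_card, Fintype.card_fin] at h2
  have h3 : Mᵀ.rank ≤ finrank (ZMod 2) (LinearMap.ker M.mulVecLin) :=
    Submodule.finrank_mono hle
  have h4 : M.rank + finrank (ZMod 2) (LinearMap.ker M.mulVecLin) = n := by
    rw [Matrix.rank]; exact h2
  have h5 : s.card = F.card - 1 := Finset.card_erase_of_mem hf0
  omega

end Pattern2
end F001


namespace F001C
open Matrix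

lemma zmod2_zero_of {a : ℕ} (h : a % 2 = 0) : ((a : ℕ) : ZMod 2) = 0 := by
  rw [ZMod.natCast_eq_zero_iff]; omega

lemma zmod2_one_of {a : ℕ} (h : a % 2 = 1) : ((a : ℕ) : ZMod 2) = 1 := by
  conv_lhs => rw [← Nat.mod_add_div a 2]
  push_cast [h]
  rw [show ((2 : ZMod 2)) = 0 from rfl]
  ring

def Aset (n m x : ℕ) : Finset (Fin n) :=
  univ.filter (fun j => if x = 0 then j.val < m
    else (j.val = 0 ∨ j.val = x ∨ (m ≤ j.val ∧ j.val ≠ m - 1 + x)))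

lemma mem_Aset_zero {n m : ℕ} (j : Fin n) : j ∈ Aset n m 0 ↔ j.val < m := by
  simp [Aset]

lemma mem_Aset_pos {n m x : ℕ} (hx : x ≠ 0) (j : Fin n) :
    j ∈ Aset n m x ↔ (j.val = 0 ∨ j.val = x ∨ (m ≤ j.val ∧ j.val ≠ m - 1 + x)) := by
  simp [Aset, hx]

lemma card_filter_val {n : ℕ} (s : Finset (Fin n)) (P : ℕ → Prop) [DecidablePred P]
    (h : ∀ j : Fin n, j ∈ s ↔ P j.val) :
    s.card = ((range n).filter P).card := by
  apply Finset.card_nbij (fun j => (j : Fin n).val)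
  · intro a ha
    simp only [Finset.mem_filter, Finset.mem_range]
    exact Finset.mem_coe.mpr (Finset.mem_filter.mpr ⟨Finset.mem_range.mpr a.isLt, (h a).mp ha⟩)
  · intro a _ b _ hab
    exact Fin.val_injective hab
  · intro a ha
    simp only [Finset.coe_filter, Finset.mem_range, Set.mem_setOf_eq] at ha
    exact ⟨⟨a, ha.1⟩, by rw [Finset.mem_coe, h]; exact ha.2, rfl⟩

set_option linter.unusedSectionVars false
section Main
variable {n m : ℕ} (hn : n + 1 = 2 * m) (hm : 4 ≤ m) (hme : m % 2 = 0)
include hn hm hme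

lemma par_single_zero : ((Aset n m 0).card : ZMod 2) = 0 := by
  rw [card_filter_val _ (fun a => a < m) (fun j => by rw [mem_Aset_zero])]
  have e2 : (range n).filter (fun a => a < m) = range m := by
    ext a; simp only [Finset.mem_filter, Finset.mem_range]; omega
  rw [e2, Finset.card_range]
  exact zmod2_zero_of (by omega)

lemma par_single_pos {x : ℕ} (hx : 1 ≤ x) (hx' : x < m) :
    ((Aset n m x).card : ZMod 2) = 0 := by
  rw [card_filter_val _ (fun a => a = 0 ∨ a = x ∨ (m ≤ a ∧ a ≠ m - 1 + x))
    (fun j => by rw [mem_Aset_pos (by omega)])]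
  have e2 : (range n).filter (fun a => a = 0 ∨ a = x ∨ (m ≤ a ∧ a ≠ m - 1 + x))
      = insert 0 (insert x ((Ico m n).erase (m - 1 + x))) := by
    ext a
    simp only [Finset.mem_filter, Finset.mem_range, Finset.mem_insert,
      Finset.mem_erase, Finset.mem_Ico]
    omega
  rw [e2, Finset.card_insert_of_notMem (by
      simp only [Finset.mem_insert, Finset.mem_erase, Finset.mem_Ico]; omega),
    Finset.card_insert_of_notMem (by
      simp only [Finset.mem_erase, Finset.mem_Ico]; omega),
    Finset.card_erase_of_mem (by simp only [Finset.mem_Ico]; omega),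
    Nat.card_Ico]
  exact zmod2_zero_of (by omega)

lemma par_pair_zero {x : ℕ} (hx : 1 ≤ x) (hx' : x < m) :
    (((Aset n m 0 ∩ Aset n m x).card : ZMod 2)) = 0 := by
  rw [card_filter_val _ (fun a => a = 0 ∨ a = x) (fun j => by
    rw [Finset.mem_inter, mem_Aset_zero, mem_Aset_pos (by omega)]
    have := j.isLt
    omega)]
  have e2 : (range n).filter (fun a => a = 0 ∨ a = x) = insert 0 {x} := by
    ext a
    simp only [Finset.mem_filter, Finset.mem_range, Finset.mem_insert,
      Finset.mem_singleton]
    omega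
  rw [e2, Finset.card_insert_of_notMem (by simp; omega), Finset.card_singleton]
  exact zmod2_zero_of (by omega)

lemma par_pair_pos {x y : ℕ} (hx : 1 ≤ x) (hx' : x < m) (hy : 1 ≤ y) (hy' : y < m)
    (hxy : x ≠ y) : (((Aset n m x ∩ Aset n m y).card : ZMod 2)) = 0 := by
  rw [card_filter_val _
    (fun a => a = 0 ∨ (m ≤ a ∧ a ≠ m - 1 + x ∧ a ≠ m - 1 + y)) (fun j => by
    rw [Finset.mem_inter, mem_Aset_pos (by omega), mem_Aset_pos (by omega)]
    omega)]
  have e2 : (range n).filter (fun a =>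
        a = 0 ∨ (m ≤ a ∧ a ≠ m - 1 + x ∧ a ≠ m - 1 + y))
      = insert 0 (((Ico m n).erase (m - 1 + x)).erase (m - 1 + y)) := by
    ext a
    simp only [Finset.mem_filter, Finset.mem_range, Finset.mem_insert,
      Finset.mem_erase, Finset.mem_Ico]
    omega
  rw [e2, Finset.card_insert_of_notMem (by
      simp only [Finset.mem_erase, Finset.mem_Ico]; omega),
    Finset.card_erase_of_mem (by
      simp only [Finset.mem_erase, Finset.mem_Ico]; omega),
    Finset.card_erase_of_mem (by simp only [Finset.mem_Ico]; omega),
    Nat.card_Ico]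
  exact zmod2_zero_of (by omega)

lemma par_triple_zero {x y : ℕ} (hx : 1 ≤ x) (hx' : x < m) (hy : 1 ≤ y) (hy' : y < m)
    (hxy : x ≠ y) : (((Aset n m 0 ∩ Aset n m x ∩ Aset n m y).card : ZMod 2)) = 1 := by
  rw [card_filter_val _ (fun a => a = 0) (fun j => by
    rw [Finset.mem_inter, Finset.mem_inter, mem_Aset_zero,
      mem_Aset_pos (by omega : x ≠ 0), mem_Aset_pos (by omega : y ≠ 0)]
    omega)]
  have e2 : (range n).filter (fun a => a = 0) = {0} := by
    ext a
    simp only [Finset.mem_filter, Finset.mem_range, Finset.mem_singleton]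
    omega
  rw [e2, Finset.card_singleton]
  exact zmod2_one_of (by omega)

lemma par_triple_pos {x y w : ℕ} (hx : 1 ≤ x) (hx' : x < m) (hy : 1 ≤ y) (hy' : y < m)
    (hw : 1 ≤ w) (hw' : w < m) (hxy : x ≠ y) (hxw : x ≠ w) (hyw : y ≠ w) :
    (((Aset n m x ∩ Aset n m y ∩ Aset n m w).card : ZMod 2)) = 1 := by
  rw [card_filter_val _ (fun a => a = 0 ∨ (m ≤ a ∧ a ≠ m - 1 + x ∧
      a ≠ m - 1 + y ∧ a ≠ m - 1 + w)) (fun j => by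
    rw [Finset.mem_inter, Finset.mem_inter, mem_Aset_pos (by omega),
      mem_Aset_pos (by omega), mem_Aset_pos (by omega)]
    omega)]
  have e2 : (range n).filter (fun a => a = 0 ∨ (m ≤ a ∧ a ≠ m - 1 + x ∧
        a ≠ m - 1 + y ∧ a ≠ m - 1 + w))
      = insert 0 ((((Ico m n).erase (m - 1 + x)).erase (m - 1 + y)).erase
          (m - 1 + w)) := by
    ext a
    simp only [Finset.mem_filter, Finset.mem_range, Finset.mem_insert,
      Finset.mem_erase, Finset.mem_Ico]
    omega
  rw [e2, Finset.card_insert_of_notMem (by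
      simp only [Finset.mem_erase, Finset.mem_Ico]; omega),
    Finset.card_erase_of_mem (by
      simp only [Finset.mem_erase, Finset.mem_Ico]; omega),
    Finset.card_erase_of_mem (by
      simp only [Finset.mem_erase, Finset.mem_Ico]; omega),
    Finset.card_erase_of_mem (by simp only [Finset.mem_Ico]; omega),
    Nat.card_Ico]
  exact zmod2_one_of (by omega)


lemma singlePar {x : ℕ} (hx : x < m) : ((Aset n m x).card : ZMod 2) = 0 := by
  rcases Nat.eq_zero_or_pos x with rfl | hx1
  · exact par_single_zero hn hm hme
  · exact par_single_pos hn hm hme hx1 hx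

lemma pairPar {x y : ℕ} (hx : x < m) (hy : y < m) (hxy : x ≠ y) :
    ((Aset n m x ∩ Aset n m y).card : ZMod 2) = 0 := by
  rcases Nat.eq_zero_or_pos x with rfl | hx1
  · exact par_pair_zero hn hm hme (by omega) hy
  · rcases Nat.eq_zero_or_pos y with rfl | hy1
    · rw [Finset.inter_comm]
      exact par_pair_zero hn hm hme hx1 hx
    · exact par_pair_pos hn hm hme hx1 hx hy1 hy hxy

lemma triplePar {x y w : ℕ} (hx : x < m) (hy : y < m) (hw : w < m)
    (hxy : x ≠ y) (hxw : x ≠ w) (hyw : y ≠ w) :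
    ((Aset n m x ∩ Aset n m y ∩ Aset n m w).card : ZMod 2) = 1 := by
  rcases Nat.eq_zero_or_pos x with rfl | hx1
  · exact par_triple_zero hn hm hme (by omega) hy (by omega) hw hyw
  · rcases Nat.eq_zero_or_pos y with rfl | hy1
    · rw [Finset.inter_comm (Aset n m x)]
      exact par_triple_zero hn hm hme hx1 hx (by omega) hw hxw
    · rcases Nat.eq_zero_or_pos w with rfl | hw1
      · rw [Finset.inter_comm, ← Finset.inter_assoc]
        exact par_triple_zero hn hm hme hx1 hx hy1 hy hxy
      · exact par_triple_pos hn hm hme hx1 hx hy1 hy hw1 hw hxy hxw hyw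

lemma Aset_ne_zero_pos {y : ℕ} (hy1 : 1 ≤ y) (hy : y < m) :
    Aset n m 0 ≠ Aset n m y := by
  obtain ⟨v, hv0, hvy, hvm⟩ : ∃ v, v ≠ 0 ∧ v ≠ y ∧ v < m := by
    rcases eq_or_ne y 1 with rfl | h
    · exact ⟨2, by omega, by omega, by omega⟩
    · exact ⟨1, by omega, by omega, by omega⟩
  intro h
  have h1 : (⟨v, by omega⟩ : Fin n) ∈ Aset n m 0 := (mem_Aset_zero _).mpr hvm
  have h2 : (⟨v, by omega⟩ : Fin n) ∉ Aset n m y := by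
    rw [mem_Aset_pos (by omega)]
    show ¬(v = 0 ∨ v = y ∨ (m ≤ v ∧ v ≠ m - 1 + y))
    omega
  exact h2 (h ▸ h1)

lemma Aset_ne_pos_pos {x y : ℕ} (hx1 : 1 ≤ x) (hx : x < m) (hy1 : 1 ≤ y)
    (hy : y < m) (hxy : x ≠ y) : Aset n m x ≠ Aset n m y := by
  intro h
  have h1 : (⟨x, by omega⟩ : Fin n) ∈ Aset n m x := by
    rw [mem_Aset_pos (by omega)]
    exact Or.inr (Or.inl rfl)
  have h2 : (⟨x, by omega⟩ : Fin n) ∉ Aset n m y := by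
    rw [mem_Aset_pos (by omega)]
    show ¬(x = 0 ∨ x = y ∨ (m ≤ x ∧ x ≠ m - 1 + y))
    omega
  exact h2 (h ▸ h1)

lemma Aset_inj {x y : ℕ} (hx : x < m) (hy : y < m) (hxy : x ≠ y) :
    Aset n m x ≠ Aset n m y := by
  rcases Nat.eq_zero_or_pos x with rfl | hx1
  · exact Aset_ne_zero_pos hn hm hme (by omega) hy
  · rcases Nat.eq_zero_or_pos y with rfl | hy1
    · exact (Aset_ne_zero_pos hn hm hme hx1 hx).symm
    · exact Aset_ne_pos_pos hn hm hme hx1 hx hy1 hy hxy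

def Fam (n m : ℕ) : Finset (Finset (Fin n)) := (range m).image (Aset n m)

lemma card_Fam : (Fam n m).card = m := by
  rw [Fam, Finset.card_image_of_injOn, Finset.card_range]
  intro x hx y hy hxy
  by_contra hne
  exact Aset_inj hn hm hme (Finset.mem_range.mp (Finset.mem_coe.mp hx))
    (Finset.mem_range.mp (Finset.mem_coe.mp hy)) hne hxy

lemma Fam_sat : SatisfiesPattern n 3 ![0,0,1] (Fam n m) := by
  intro i S hsub hcard
  have hmem : ∀ A ∈ S, ∃ x, x < m ∧ A = Aset n m x := by
    intro A hA
    have := hsub hA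
    rw [Fam, Finset.mem_image] at this
    obtain ⟨x, hx, rfl⟩ := this
    exact ⟨x, Finset.mem_range.mp hx, rfl⟩
  fin_cases i
  · obtain ⟨A, rfl⟩ := Finset.card_eq_one.mp (by simpa using hcard)
    obtain ⟨x, hx, rfl⟩ := hmem _ (Finset.mem_singleton_self _)
    simpa using singlePar hn hm hme hx
  · obtain ⟨A, B, hAB, rfl⟩ := Finset.card_eq_two.mp (by simpa using hcard)
    obtain ⟨x, hx, hAx⟩ := hmem A (by simp)
    obtain ⟨y, hy, hBy⟩ := hmem B (by simp)
    subst hAx; subst hBy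
    have hxy : x ≠ y := fun h => hAB (by rw [h])
    have hinf : ({Aset n m x, Aset n m y} : Finset (Finset (Fin n))).inf id
        = Aset n m x ∩ Aset n m y := by
      simp [Finset.inf_insert, Finset.inf_eq_inter]
    rw [hinf]
    simpa using pairPar hn hm hme hx hy hxy
  · obtain ⟨A, B, C, hAB, hAC, hBC, rfl⟩ := Finset.card_eq_three.mp
      (by simpa using hcard)
    obtain ⟨x, hx, hAx⟩ := hmem A (by simp)
    obtain ⟨y, hy, hBy⟩ := hmem B (by simp)
    obtain ⟨w, hw, hCw⟩ := hmem C (by simp)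
    subst hAx; subst hBy; subst hCw
    have hxy : x ≠ y := fun h => hAB (by rw [h])
    have hxw : x ≠ w := fun h => hAC (by rw [h])
    have hyw : y ≠ w := fun h => hBC (by rw [h])
    have hinf : ({Aset n m x, Aset n m y, Aset n m w} :
        Finset (Finset (Fin n))).inf id
        = Aset n m x ∩ Aset n m y ∩ Aset n m w := by
      simp [Finset.inf_insert, Finset.inf_eq_inter, Finset.inter_assoc]
    rw [hinf]
    simpa using triplePar hn hm hme hx hy hw hxy hxw hyw

end Main
end F001C


theorem f_001_mod4_3 (n : ℕ) (h4 : n % 4 = 3) (h7 : 7 ≤ n) :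
    maxPattern 3 ![0, 0, 1] n = (n + 1) / 2 := by
  have hn : n + 1 = 2 * ((n + 1) / 2) := by omega
  have hm : 4 ≤ (n + 1) / 2 := by omega
  have hme : (n + 1) / 2 % 2 = 0 := by omega
  have hmem : (n + 1) / 2 ∈ {m : ℕ | ∃ F : Finset (Finset (Fin n)),
      SatisfiesPattern n 3 ![0,0,1] F ∧ F.card = m} :=
    ⟨F001C.Fam n ((n + 1) / 2), F001C.Fam_sat hn hm hme, F001C.card_Fam hn hm hme⟩
  rw [maxPattern]
  apply le_antisymm
  · apply csSup_le ⟨_, hmem⟩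
    rintro b ⟨F, hF, rfl⟩
    exact F001.card_le hF h7 (by omega)
  · apply le_csSup _ hmem
    refine ⟨(n + 1) / 2, ?_⟩
    rintro b ⟨F, hF, rfl⟩
    exact F001.card_le hF h7 (by omega)
end

section
/- (Trace Lemma) Let α = (α_1,…,α_k) ∈ F_2^k and let β = (α_{t+1},…,α_{t+r}) ∈ F_2^r, where t ≥ 0, r ≥ 2, t + r ≤ k, f_α(n) > k, and α_{t+1} ≠ α_{t+2}. Then f_α(n) ≤ f_β(n) + t. -/
open Finset

lemma mem_inf_fin {n : ℕ} {ι : Type*} {s : Finset ι} {f : ι → Finset (Fin n)} {a : Fin n} :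
    a ∈ s.inf f ↔ ∀ i ∈ s, a ∈ f i := by
  induction s using Finset.cons_induction <;> simp [*]


/-- Trace Lemma. -/
theorem trace_lemma (n k t r : ℕ) (hr : 2 ≤ r) (htr : t + r ≤ k)
    (α : Fin k → ZMod 2) (β : Fin r → ZMod 2)
    (hβ : ∀ j : Fin r, β j = α ⟨t + j.val, by have := j.isLt; omega⟩)
    (hne : α ⟨t, by omega⟩ ≠ α ⟨t + 1, by omega⟩)
    (hf : k < maxPattern k α n) :
    maxPattern k α n ≤ maxPattern r β n + t := by
  have hbddβ : BddAbove {m : ℕ | ∃ F : Finset (Finset (Fin n)),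
      SatisfiesPattern n r β F ∧ F.card = m} :=
    ⟨Fintype.card (Finset (Fin n)), fun m ⟨F, _, hc⟩ => hc ▸ F.card_le_univ⟩
  have hne0 : {m : ℕ | ∃ F : Finset (Finset (Fin n)),
      SatisfiesPattern n k α F ∧ F.card = m}.Nonempty := by
    refine ⟨0, ∅, ?_, rfl⟩
    intro i S hS hc
    have : S = ∅ := Finset.subset_empty.mp hS
    simp [this] at hc
  apply csSup_le hne0
  rintro m ⟨F, hF, rfl⟩
  by_cases hm : F.card ≤ t
  · exact le_trans hm (Nat.le_add_left t _)
  push_neg at hm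
  obtain ⟨T, hTF, hTcard⟩ := Finset.exists_subset_card_eq hm.le
  set D := T.inf id with hD
  have hinj : Set.InjOn (fun A => A ∩ D) (F \ T : Finset (Finset (Fin n))) := by
    intro A hA B hB hAB
    simp only [Finset.coe_sdiff, Set.mem_diff, Finset.mem_coe] at hA hB
    by_contra hab
    have hinfA : (insert A T).inf id = A ∩ D := by
      rw [Finset.inf_insert]; rfl
    have h1 : (((insert A T).inf id).card : ZMod 2) = α ⟨t, by omega⟩ := by
      apply hF ⟨t, by omega⟩
      · exact Finset.insert_subset hA.1 hTF
      · simp [Finset.card_insert_of_notMem hA.2, hTcard]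
    have h2 : (((insert A (insert B T)).inf id).card : ZMod 2) = α ⟨t + 1, by omega⟩ := by
      apply hF ⟨t + 1, by omega⟩
      · exact Finset.insert_subset hA.1 (Finset.insert_subset hB.1 hTF)
      · rw [Finset.card_insert_of_notMem, Finset.card_insert_of_notMem hB.2]
        · simp [hTcard]
        · simp only [Finset.mem_insert]; push_neg; exact ⟨hab, hA.2⟩
    have hAB' : A ∩ D = B ∩ D := hAB
    have key := Finset.ext_iff.mp hAB'
    have hinf2 : (insert A (insert B T)).inf id = A ∩ D := by
      rw [Finset.inf_insert, Finset.inf_insert]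
      show A ⊓ (B ⊓ D) = A ∩ D
      simp only [Finset.inf_eq_inter]
      ext x
      have := key x
      simp only [Finset.mem_inter] at this ⊢
      tauto
    apply hne
    rw [← h1, hinfA, ← hinf2, h2]
  set G := (F \ T).image (fun A => A ∩ D) with hG
  have hGcard : G.card = F.card - t := by
    rw [hG, Finset.card_image_of_injOn hinj, Finset.card_sdiff_of_subset hTF, hTcard]
  have hGpat : SatisfiesPattern n r β G := by
    intro j S hSG hScard
    set S' := (F \ T).filter (fun A => A ∩ D ∈ S) with hS'
    have hS'sub : S' ⊆ F \ T := Finset.filter_subset _ _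
    have himg : S'.image (fun A => A ∩ D) = S := by
      apply Finset.Subset.antisymm
      · intro x hx
        obtain ⟨A, hA, rfl⟩ := Finset.mem_image.mp hx
        exact (Finset.mem_filter.mp hA).2
      · intro x hx
        obtain ⟨A, hA, rfl⟩ := Finset.mem_image.mp (hSG hx)
        exact Finset.mem_image.mpr ⟨A, Finset.mem_filter.mpr ⟨hA, hx⟩, rfl⟩
    have hS'card : S'.card = j.val + 1 := by
      rw [← hScard, ← himg, Finset.card_image_of_injOn (hinj.mono (by exact_mod_cast hS'sub))]
    have hS'ne : S'.Nonempty := Finset.card_pos.mp (by omega)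
    have hdisj : Disjoint S' T := by
      exact Finset.disjoint_of_subset_left hS'sub Finset.sdiff_disjoint
    have hunion_card : (S' ∪ T).card = t + j.val + 1 := by
      rw [Finset.card_union_of_disjoint hdisj, hS'card, hTcard]; omega
    have hunion_sub : S' ∪ T ⊆ F := by
      apply Finset.union_subset _ hTF
      exact hS'sub.trans (Finset.sdiff_subset)
    have hinfeq : S.inf id = (S' ∪ T).inf id := by
      ext x
      rw [mem_inf_fin, mem_inf_fin]
      simp only [id_eq, Finset.mem_union]
      constructor
      · intro h i hi
        obtain ⟨A0, hA0⟩ := hS'ne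
        have hA0' := h _ (himg ▸ Finset.mem_image.mpr ⟨A0, hA0, rfl⟩)
        have hxD : x ∈ D := (Finset.mem_inter.mp hA0').2
        rcases hi with hi | hi
        · exact (Finset.mem_inter.mp (h _ (himg ▸ Finset.mem_image.mpr ⟨i, hi, rfl⟩))).1
        · exact mem_inf_fin.mp hxD i hi
      · intro h B hB
        obtain ⟨A, hA, rfl⟩ := Finset.mem_image.mp (himg ▸ hB)
        refine Finset.mem_inter.mpr ⟨h A (Or.inl hA), ?_⟩
        rw [hD, mem_inf_fin]
        intro i hi
        exact h i (Or.inr hi)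
    have := hF ⟨t + j.val, by have := j.isLt; omega⟩ (S' ∪ T) hunion_sub (by simpa using hunion_card)
    rw [hinfeq, this, hβ]
  have hle : F.card - t ≤ maxPattern r β n :=
    le_csSup hbddβ ⟨G, hGpat, hGcard⟩
  omega
end

section
/- (Partition Sum Lemma) Let α = (α_1,…,α_k) and β = (β_1,…,β_k) be vectors in F_2^k and let γ = α + β (coordinatewise sum over F_2). Then for any r with 1 ≤ r ≤ n−1 such that f_α(r) > k and f_β(n−r) > k, we have f_γ(n) ≥ min{f_α(r), f_β(n−r)}. -/
open Finset

namespace PartitionSum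

variable {n r : ℕ}

/-- Embedding of `Fin r` into `Fin n` (first coordinates). -/
def eL (h : r ≤ n) : Fin r ↪ Fin n := Fin.castLEEmb h

/-- Embedding of `Fin (n-r)` into `Fin n` (last coordinates). -/
def eR (n r : ℕ) : Fin (n - r) ↪ Fin n :=
  ⟨fun i => ⟨r + i.1, by omega⟩, fun a b hab => by
    simp only [Fin.mk.injEq, add_right_inj] at hab
    exact Fin.ext hab⟩

@[simp] lemma eL_val (h : r ≤ n) (x : Fin r) : ((eL h) x).val = x.val := rfl

@[simp] lemma eR_val (y : Fin (n - r)) : ((eR n r) y).val = r + y.val := rfl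

lemma eL_not_mem_map_eR (h : r ≤ n) (x : Fin r) (t : Finset (Fin (n - r))) :
    (eL h) x ∉ t.map (eR n r) := by
  intro hx
  obtain ⟨b, _, hb⟩ := Finset.mem_map.mp hx
  have h1 : r + b.val = x.val := by rw [← eR_val b, ← eL_val h x, hb]
  have := x.isLt
  omega

lemma disj (h : r ≤ n) (s : Finset (Fin r)) (t : Finset (Fin (n - r))) :
    Disjoint (s.map (eL h)) (t.map (eR n r)) := by
  rw [Finset.disjoint_left]
  rintro x hx hx'
  obtain ⟨a, _, ha⟩ := Finset.mem_map.mp hx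
  exact eL_not_mem_map_eR h a t (ha ▸ hx')

lemma union_inter (h : r ≤ n) (s₁ s₂ : Finset (Fin r)) (t₁ t₂ : Finset (Fin (n - r))) :
    (s₁.map (eL h) ∪ t₁.map (eR n r)) ∩ (s₂.map (eL h) ∪ t₂.map (eR n r)) =
      (s₁ ∩ s₂).map (eL h) ∪ (t₁ ∩ t₂).map (eR n r) := by
  rw [Finset.union_inter_distrib_right, Finset.inter_union_distrib_left,
    Finset.inter_union_distrib_left, Finset.map_inter, Finset.map_inter]
  rw [Finset.disjoint_iff_inter_eq_empty.mp (disj h s₁ t₂),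
    Finset.disjoint_iff_inter_eq_empty.mp ((disj h s₂ t₁).symm)]
  simp [Finset.union_assoc]

lemma inf_map_union {ι : Type*} (h : r ≤ n) (f : ι → Finset (Fin r))
    (g : ι → Finset (Fin (n - r))) (T : Finset ι) (hT : T.Nonempty) :
    T.inf (fun j => (f j).map (eL h) ∪ (g j).map (eR n r)) =
      (T.inf f).map (eL h) ∪ (T.inf g).map (eR n r) := by
  induction hT using Finset.Nonempty.cons_induction with
  | singleton a => simp
  | cons a T ha hT ih =>
      rw [Finset.inf_cons, Finset.inf_cons, Finset.inf_cons, ih]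
      exact union_inter h _ _ _ _

lemma maxPattern_mem (k : ℕ) (α : Fin k → ZMod 2) (n : ℕ) :
    ∃ F : Finset (Finset (Fin n)), SatisfiesPattern n k α F ∧ F.card = maxPattern k α n := by
  have hne : ({m : ℕ | ∃ F : Finset (Finset (Fin n)),
      SatisfiesPattern n k α F ∧ F.card = m}).Nonempty := by
    refine ⟨0, ∅, ?_, rfl⟩
    intro i S hS hcard
    have : S = ∅ := Finset.subset_empty.mp hS
    simp [this] at hcard
  have hbdd : BddAbove {m : ℕ | ∃ F : Finset (Finset (Fin n)),
      SatisfiesPattern n k α F ∧ F.card = m} := by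
    refine ⟨Fintype.card (Finset (Fin n)), ?_⟩
    rintro m ⟨F, _, rfl⟩
    exact Finset.card_le_univ F
  exact Nat.sSup_mem hne hbdd

end PartitionSum

/-- Partition Sum Lemma. -/
theorem partition_sum_lemma (n k r : ℕ) (α β : Fin k → ZMod 2)
    (hr1 : 1 ≤ r) (hrn : r ≤ n - 1)
    (hα : k < maxPattern k α r) (hβ : k < maxPattern k β (n - r)) :
    min (maxPattern k α r) (maxPattern k β (n - r)) ≤
      maxPattern k (fun i => α i + β i) n := by
  classical
  obtain ⟨Fa, hFa, hFacard⟩ := PartitionSum.maxPattern_mem k α r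
  obtain ⟨Fb, hFb, hFbcard⟩ := PartitionSum.maxPattern_mem k β (n - r)
  set m := min (maxPattern k α r) (maxPattern k β (n - r)) with hm
  obtain ⟨Fa', hFa'sub, hFa'card⟩ :=
    Finset.exists_subset_card_eq (show m ≤ Fa.card by rw [hFacard]; exact min_le_left _ _)
  obtain ⟨Fb', hFb'sub, hFb'card⟩ :=
    Finset.exists_subset_card_eq (show m ≤ Fb.card by rw [hFbcard]; exact min_le_right _ _)
  have hrle : r ≤ n := by omega
  set eL := PartitionSum.eL hrle with heL
  set eR := PartitionSum.eR n r with heR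
  have e : {x // x ∈ Fa'} ≃ {x // x ∈ Fb'} :=
    Finset.equivOfCardEq (by rw [hFa'card, hFb'card])
  -- the combined map
  set h : {x // x ∈ Fa'} → Finset (Fin n) :=
    fun F => (F.1.map eL) ∪ ((e F).1.map eR) with hh
  have key : ∀ (F : {x // x ∈ Fa'}) (x : Fin r), x ∈ F.1 ↔ eL x ∈ h F := by
    intro F x
    constructor
    · intro hx
      exact Finset.mem_union_left _ (Finset.mem_map_of_mem _ hx)
    · intro hx
      rcases Finset.mem_union.mp hx with h1 | h1
      · exact (Finset.mem_map' eL).mp h1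
      · exact absurd h1 (PartitionSum.eL_not_mem_map_eR hrle x _)
  have hinj : Function.Injective h := by
    intro F₁ F₂ hF
    have hv : F₁.1 = F₂.1 := by
      ext x
      rw [key F₁, key F₂, hF]
    exact Subtype.ext hv
  set G : Finset (Finset (Fin n)) := Fa'.attach.image h with hG
  have hGcard : G.card = m := by
    rw [hG, Finset.card_image_of_injective _ hinj, Finset.card_attach, hFa'card]
  have hGpat : SatisfiesPattern n k (fun i => α i + β i) G := by
    intro i S hS hScard
    obtain ⟨T, hTsub, hTimg⟩ := Finset.subset_image_iff.mp hS
    have hTcard : T.card = i.val + 1 := by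
      rw [← hScard, ← hTimg, Finset.card_image_of_injective _ hinj]
    have hTne : T.Nonempty := Finset.card_pos.mp (by omega)
    -- the two projected families
    set Ta : Finset (Finset (Fin r)) := T.image (fun F => F.1) with hTa
    set Tb : Finset (Finset (Fin (n - r))) := T.image (fun F => (e F).1) with hTb
    have hTaInj : Function.Injective (fun F : {x // x ∈ Fa'} => F.1) :=
      Subtype.val_injective
    have hTbInj : Function.Injective (fun F : {x // x ∈ Fa'} => (e F).1) :=
      Subtype.val_injective.comp e.injective
    have hTacard : Ta.card = i.val + 1 := by
      rw [hTa, Finset.card_image_of_injective _ hTaInj, hTcard]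
    have hTbcard : Tb.card = i.val + 1 := by
      rw [hTb, Finset.card_image_of_injective _ hTbInj, hTcard]
    have hTasub : Ta ⊆ Fa := by
      intro x hx
      obtain ⟨F, _, rfl⟩ := Finset.mem_image.mp hx
      exact hFa'sub F.2
    have hTbsub : Tb ⊆ Fb := by
      intro x hx
      obtain ⟨F, _, rfl⟩ := Finset.mem_image.mp hx
      exact hFb'sub (e F).2
    have hα' : ((Ta.inf id).card : ZMod 2) = α i := hFa i Ta hTasub hTacard
    have hβ' : ((Tb.inf id).card : ZMod 2) = β i := hFb i Tb hTbsub hTbcard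
    have hSinf : S.inf id =
        (Ta.inf id).map eL ∪ (Tb.inf id).map eR := by
      rw [← hTimg, Finset.inf_image, hTa, hTb, Finset.inf_image, Finset.inf_image]
      have := PartitionSum.inf_map_union hrle (fun F : {x // x ∈ Fa'} => F.1)
        (fun F => (e F).1) T hTne
      simpa [Function.comp, hh] using this
    have hcard : (S.inf id).card = (Ta.inf id).card + (Tb.inf id).card := by
      rw [hSinf, Finset.card_union_of_disjoint (PartitionSum.disj hrle _ _),
        Finset.card_map, Finset.card_map]
    rw [hcard]
    push_cast
    rw [hα', hβ']
  have hmem : m ∈ {m : ℕ | ∃ F : Finset (Finset (Fin n)),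
      SatisfiesPattern n k (fun i => α i + β i) F ∧ F.card = m} := ⟨G, hGpat, hGcard⟩
  have hbdd : BddAbove {m : ℕ | ∃ F : Finset (Finset (Fin n)),
      SatisfiesPattern n k (fun i => α i + β i) F ∧ F.card = m} := by
    refine ⟨Fintype.card (Finset (Fin n)), ?_⟩
    rintro m ⟨F, _, rfl⟩
    exact Finset.card_le_univ F
  exact le_csSup hbdd hmem
end

section
/- As n → ∞, f_{(0,1,1,0)}(n) ~ √(2n); that is, the limit as n → ∞ of f_{(0,1,1,0)}(n)/√(2n) equals 1. -/
open Finset Matrix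

lemma choose_two_eq {N e : ℕ} (h : N * (N - 1) = e * 2) : N.choose 2 = e := by
  rw [Nat.choose_two_right, h, Nat.mul_div_cancel _ (by norm_num)]

lemma cast_parity {c d r : ℕ} (h : c = 2 * d + r) : ((c : ZMod 2)) = (r : ZMod 2) := by
  subst h
  push_cast
  rw [show (2 : ZMod 2) = 0 from by decide]
  ring

lemma matrix_rank_add_le {m n K : Type*} [Fintype m] [Fintype n] [Field K]
    (A B : Matrix m n K) : (A + B).rank ≤ A.rank + B.rank := by
  have h : LinearMap.range (A + B).mulVecLin ≤
      LinearMap.range A.mulVecLin ⊔ LinearMap.range B.mulVecLin := by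
    rw [Matrix.mulVecLin_add]
    rintro x ⟨v, rfl⟩
    exact Submodule.add_mem_sup ⟨v, rfl⟩ ⟨v, rfl⟩
  calc (A + B).rank ≤ Module.finrank K ↥(LinearMap.range A.mulVecLin ⊔ LinearMap.range B.mulVecLin) :=
        Submodule.finrank_mono h
    _ ≤ A.rank + B.rank := Submodule.finrank_add_le_finrank_add_finrank _ _

lemma upper_bound {n : ℕ} (F : Finset (Finset (Fin n)))
    (hF : SatisfiesPattern n 4 ![0,1,1,0] F) :
    F.card.choose 2 ≤ n + F.card := by
  classical
  set ι := {A // A ∈ F} with hι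
  set P := {p : Finset ι // p.card = 2} with hP
  -- the "intersection indicator" matrix
  set U : Matrix P (Fin n) (ZMod 2) :=
    fun p x => if ∀ A ∈ p.1, x ∈ A.1 then 1 else 0 with hU
  set W : Matrix P ι (ZMod 2) := fun p A => if A ∈ p.1 then 1 else 0 with hW
  have key : U * Uᵀ + W * Wᵀ = 1 := by
    ext p q
    have hmem : ∀ x : Fin n, x ∈ ((p.1 ∪ q.1).inf fun A => A.1) ↔
        (∀ A ∈ p.1, x ∈ A.1) ∧ (∀ A ∈ q.1, x ∈ A.1) := by
      intro x
      simp [Finset.mem_inf, Finset.mem_union, or_imp, forall_and]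
    have hUU : (U * Uᵀ) p q = (((p.1 ∪ q.1).inf fun A => A.1).card : ZMod 2) := by
      rw [Matrix.mul_apply]
      have hterm : ∀ x : Fin n, U p x * Uᵀ x q
          = if x ∈ ((p.1 ∪ q.1).inf fun A => A.1) then (1 : ZMod 2) else 0 := by
        intro x
        rw [Matrix.transpose_apply]
        simp only [hU, Matrix.transpose_apply, ite_mul, one_mul, zero_mul, ← ite_and]
        exact (if_congr (hmem x) rfl rfl).symm
      rw [Finset.sum_congr rfl fun x _ => hterm x, Finset.sum_ite_mem, Finset.univ_inter,
        Finset.sum_const, nsmul_eq_mul, mul_one]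
    have hWW : (W * Wᵀ) p q = (((p.1 ∩ q.1)).card : ZMod 2) := by
      rw [Matrix.mul_apply]
      have hterm : ∀ A : ι, W p A * Wᵀ A q
          = if A ∈ p.1 ∩ q.1 then (1 : ZMod 2) else 0 := by
        intro A
        rw [Matrix.transpose_apply]
        simp only [hW, Matrix.transpose_apply, ite_mul, one_mul, zero_mul, Finset.mem_inter]
        by_cases h1 : A ∈ p.1 <;> by_cases h2 : A ∈ q.1 <;> simp [h1, h2]
      rw [Finset.sum_congr rfl fun A _ => hterm A, Finset.sum_ite_mem, Finset.univ_inter,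
        Finset.sum_const, nsmul_eq_mul, mul_one]
    have hcard_union : (p.1 ∪ q.1).card + (p.1 ∩ q.1).card = 4 := by
      rw [Finset.card_union_add_card_inter, p.2, q.2]
    have hpattern : ∀ i : Fin 4, (p.1 ∪ q.1).card = i.val + 1 →
        ((((p.1 ∪ q.1)).inf fun A => A.1).card : ZMod 2) = ![0,1,1,0] i := by
      intro i hcard
      have hinj : Set.InjOn Subtype.val ((p.1 ∪ q.1) : Set ι) := Subtype.val_injective.injOn
      have hsub : (p.1 ∪ q.1).image Subtype.val ⊆ F := by
        intro A hA
        simp only [Finset.mem_image] at hA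
        obtain ⟨B, _, rfl⟩ := hA
        exact B.2
      have := hF i ((p.1 ∪ q.1).image Subtype.val) hsub
        (by rw [Finset.card_image_of_injective _ Subtype.val_injective, hcard])
      rwa [Finset.inf_image] at this
    have hci : (p.1 ∩ q.1).card ≤ 2 := by
      calc (p.1 ∩ q.1).card ≤ p.1.card := Finset.card_le_card Finset.inter_subset_left
        _ = 2 := p.2
    simp only [Matrix.add_apply, hUU, hWW]
    interval_cases h : (p.1 ∩ q.1).card
    · -- disjoint: 4 distinct sets
      have hpq : p ≠ q := by
        intro hpq; rw [hpq] at h; simp [q.2] at h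
      rw [hpattern 3 (by omega)]
      simp only [Matrix.one_apply_ne hpq, h]
      decide
    · have hpq : p ≠ q := by
        intro hpq; rw [hpq] at h; simp [q.2] at h
      rw [hpattern 2 (by omega)]
      simp only [Matrix.one_apply_ne hpq, h]
      decide
    · -- p = q
      have hpq : p = q := by
        have h1 : p.1 ∩ q.1 = p.1 :=
          Finset.eq_of_subset_of_card_le Finset.inter_subset_left (by rw [h, p.2])
        have h2 : p.1 ∩ q.1 = q.1 :=
          Finset.eq_of_subset_of_card_le Finset.inter_subset_right (by rw [h, q.2])
        exact Subtype.ext (h1 ▸ h2)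
      rw [hpattern 1 (by omega), hpq]
      simp only [Matrix.one_apply_eq, h]
      decide
  -- rank argument
  have h1 : (1 : Matrix P P (ZMod 2)).rank = Fintype.card P := Matrix.rank_one
  have hcardP : Fintype.card P = F.card.choose 2 := by
    have h2 : Fintype.card P = (Fintype.card ι).choose 2 := Fintype.card_finset_len 2
    rw [h2, Fintype.card_coe]
  have hle : (1 : Matrix P P (ZMod 2)).rank ≤ n + F.card := by
    rw [← key]
    calc (U * Uᵀ + W * Wᵀ).rank ≤ (U * Uᵀ).rank + (W * Wᵀ).rank := matrix_rank_add_le _ _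
      _ ≤ n + F.card := by
          have hu : (U * Uᵀ).rank ≤ n := by
            calc (U * Uᵀ).rank ≤ U.rank := Matrix.rank_mul_le_left U Uᵀ
              _ ≤ Fintype.card (Fin n) := Matrix.rank_le_card_width U
              _ = n := Fintype.card_fin n
          have hw : (W * Wᵀ).rank ≤ F.card := by
            calc (W * Wᵀ).rank ≤ W.rank := Matrix.rank_mul_le_left W Wᵀ
              _ ≤ Fintype.card ι := Matrix.rank_le_card_width W
              _ = F.card := Fintype.card_coe F
          omega
  omega

lemma lower_bound {n j : ℕ} (h : (4 * j + 5) * (2 * j + 2) ≤ n) :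
    ∃ F : Finset (Finset (Fin n)), SatisfiesPattern n 4 ![0,1,1,0] F ∧ F.card = 4 * j + 5 := by
  classical
  set m := 4 * j + 5 with hm
  set P := {p : Finset (Fin m) // p.card = 2} with hP
  have hcardP : Fintype.card P = m.choose 2 := by
    have h0 := Fintype.card_finset_len (α := Fin m) 2
    rw [Fintype.card_fin] at h0
    exact h0
  have hchoosem : m.choose 2 = (4 * j + 5) * (2 * j + 2) :=
    choose_two_eq (by rw [show m - 1 = 4 * j + 4 from by omega, hm]; ring)
  obtain ⟨φ⟩ : Nonempty (P ↪ Fin n) := by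
    apply Function.Embedding.nonempty_of_card_le
    rw [hcardP, Fintype.card_fin, hchoosem]; exact h
  set Fi : Fin m → Finset (Fin n) :=
    fun i => ((univ : Finset P).filter fun p => i ∉ p.1).map φ with hFi
  -- membership in Fi
  have hmemFi : ∀ (i : Fin m) (x : Fin n), x ∈ Fi i ↔ ∃ p : P, i ∉ p.1 ∧ φ p = x := by
    intro i x
    simp [hFi, Finset.mem_map, Finset.mem_filter]
  have hinj : Function.Injective Fi := by
    intro a b hab
    by_contra hne
    -- find c outside {a, b}
    obtain ⟨c, hc⟩ : ∃ c : Fin m, c ∉ ({a, b} : Finset (Fin m)) := by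
      by_contra hcon
      push_neg at hcon
      have h1 : (univ : Finset (Fin m)) ⊆ {a, b} := fun c _ => hcon c
      have h2 := Finset.card_le_card h1
      have h3 : ({a, b} : Finset (Fin m)).card ≤ 2 :=
        (Finset.card_insert_le _ _).trans (by simp)
      rw [Finset.card_univ, Fintype.card_fin] at h2
      omega
    simp only [Finset.mem_insert, Finset.mem_singleton, not_or] at hc
    have hbc : b ≠ c := fun hbc => hc.2 hbc.symm
    have hp0 : ({b, c} : Finset (Fin m)).card = 2 := by
      rw [Finset.card_insert_of_notMem (by simpa using hbc), Finset.card_singleton]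
    set p0 : P := ⟨{b, c}, hp0⟩ with hp0def
    have hxa : φ p0 ∈ Fi a := by
      rw [hmemFi]
      refine ⟨p0, ?_, rfl⟩
      simp only [hp0def, Finset.mem_insert, Finset.mem_singleton, not_or]
      exact ⟨hne, fun h' => hc.1 h'.symm⟩
    rw [hab, hmemFi] at hxa
    obtain ⟨q, hq1, hq2⟩ := hxa
    have : q = p0 := φ.injective hq2
    subst this
    exact hq1 (by simp [hp0def])
  refine ⟨(univ : Finset (Fin m)).image Fi, ?_, ?_⟩
  · intro i S hS hScard
    obtain ⟨I, -, hI⟩ := Finset.subset_image_iff.mp hS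
    have hIcard : I.card = i.val + 1 := by
      rw [← hScard, ← hI, Finset.card_image_of_injective _ hinj]
    have hInonempty : I.Nonempty := Finset.card_pos.mp (by omega)
    -- compute the intersection
    have hinf : S.inf id = ((univ : Finset P).filter fun p => ∀ a ∈ I, a ∉ p.1).map φ := by
      rw [← hI, Finset.inf_image]
      ext x
      rw [Finset.mem_inf]
      simp only [CompTriple.comp_eq, Finset.mem_map, Finset.mem_filter, Finset.mem_univ,
        true_and]
      constructor
      · intro hx
        obtain ⟨a0, ha0⟩ := hInonempty
        obtain ⟨p, hp1, hp2⟩ := (hmemFi a0 x).mp (hx a0 ha0)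
        refine ⟨p, fun a ha => ?_, hp2⟩
        obtain ⟨q, hq1, hq2⟩ := (hmemFi a x).mp (hx a ha)
        rw [← hp2] at hq2
        rwa [φ.injective hq2] at hq1
      · rintro ⟨p, hp1, rfl⟩ a ha
        exact (hmemFi a (φ p)).mpr ⟨p, hp1 a ha, rfl⟩
    have hcount : ((univ : Finset P).filter fun p => ∀ a ∈ I, a ∉ p.1).card
        = (Iᶜ.powersetCard 2).card := by
      apply Finset.card_bij (fun (p : P) _ => p.1)
      · intro p hp
        simp only [Finset.mem_filter, Finset.mem_univ, true_and] at hp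
        rw [Finset.mem_powersetCard]
        exact ⟨fun a ha => Finset.mem_compl.mpr fun haI => hp a haI ha, p.2⟩
      · intro p _ q _ hpq
        exact Subtype.ext hpq
      · intro s hs
        rw [Finset.mem_powersetCard] at hs
        refine ⟨⟨s, hs.2⟩, ?_, rfl⟩
        simp only [Finset.mem_filter, Finset.mem_univ, true_and]
        exact fun a haI has => Finset.mem_compl.mp (hs.1 has) haI
    rw [Finset.card_powersetCard, Finset.card_compl, Fintype.card_fin, hIcard] at hcount
    rw [hinf, Finset.card_map, hcount]
    -- parity computation
    rcases i with ⟨iv, hiv⟩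
    interval_cases iv <;> simp only [Fin.val_mk] at hcount ⊢
    · rw [show m - (0 + 1) = 4 * j + 4 from by omega]
      rw [choose_two_eq (N := 4 * j + 4) (e := (2 * j + 2) * (4 * j + 3))
        (by rw [show 4 * j + 4 - 1 = 4 * j + 3 from by omega]; ring)]
      rw [cast_parity (d := (j + 1) * (4 * j + 3)) (r := 0) (by ring)]
      rfl
    · rw [show m - (1 + 1) = 4 * j + 3 from by omega]
      rw [choose_two_eq (N := 4 * j + 3) (e := (4 * j + 3) * (2 * j + 1))
        (by rw [show 4 * j + 3 - 1 = 4 * j + 2 from by omega]; ring)]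
      rw [cast_parity (d := 4 * j * j + 5 * j + 1) (r := 1) (by ring)]
      rfl
    · rw [show m - (2 + 1) = 4 * j + 2 from by omega]
      rw [choose_two_eq (N := 4 * j + 2) (e := (2 * j + 1) * (4 * j + 1))
        (by rw [show 4 * j + 2 - 1 = 4 * j + 1 from by omega]; ring)]
      rw [cast_parity (d := 4 * j * j + 3 * j) (r := 1) (by ring)]
      rfl
    · rw [show m - (3 + 1) = 4 * j + 1 from by omega]
      rw [choose_two_eq (N := 4 * j + 1) (e := (2 * j) * (4 * j + 1))
        (by rw [show 4 * j + 1 - 1 = 4 * j from by omega]; ring)]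
      rw [cast_parity (d := j * (4 * j + 1)) (r := 0) (by ring)]
      rfl
  · rw [Finset.card_image_of_injective _ hinj, Finset.card_univ, Fintype.card_fin]

lemma two_mul_choose_two (m : ℕ) : 2 * m.choose 2 = m * (m - 1) := by
  induction m with
  | zero => rfl
  | succ k ih =>
    rw [Nat.choose_succ_succ, Nat.mul_add, ih, Nat.choose_one_right]
    cases k with
    | zero => simp
    | succ l => simp only [Nat.succ_sub_one]; ring

lemma sqrt2n_atTop : Filter.Tendsto (fun n : ℕ => Real.sqrt (2 * n)) Filter.atTop Filter.atTop := by
  rw [Filter.tendsto_atTop_atTop]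
  intro b
  refine ⟨⌈b⌉₊ ^ 2, fun n hn => ?_⟩
  have h0 : ((⌈b⌉₊ ^ 2 : ℕ) : ℝ) ≤ (n : ℝ) := Nat.cast_le.mpr hn
  push_cast at h0
  have hnn : (0 : ℝ) ≤ (n : ℝ) := Nat.cast_nonneg n
  calc b ≤ (⌈b⌉₊ : ℝ) := Nat.le_ceil b
    _ = Real.sqrt ((⌈b⌉₊ : ℝ) ^ 2) := (Real.sqrt_sq (by positivity)).symm
    _ ≤ Real.sqrt (2 * n) := Real.sqrt_le_sqrt (by linarith)

theorem f_0110_asymp :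
    Filter.Tendsto (fun n : ℕ => (maxPattern 4 ![0, 1, 1, 0] n : ℝ) / Real.sqrt (2 * n))
      Filter.atTop (nhds 1) := by
  have hnonempty : ∀ n : ℕ, {m : ℕ | ∃ F : Finset (Finset (Fin n)),
      SatisfiesPattern n 4 ![0,1,1,0] F ∧ F.card = m}.Nonempty := by
    intro n
    refine ⟨0, ∅, fun i S hS hcard => ?_, rfl⟩
    rw [Finset.subset_empty.mp hS] at hcard
    simp at hcard
  have hbdd : ∀ n : ℕ, BddAbove {m : ℕ | ∃ F : Finset (Finset (Fin n)),
      SatisfiesPattern n 4 ![0,1,1,0] F ∧ F.card = m} := by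
    intro n
    refine ⟨2 ^ n, fun m hm => ?_⟩
    obtain ⟨F, -, rfl⟩ := hm
    calc F.card ≤ (univ : Finset (Finset (Fin n))).card := Finset.card_le_univ F
      _ = 2 ^ n := by rw [Finset.card_univ, Fintype.card_finset, Fintype.card_fin]
  have hupper : ∀ n : ℕ, (maxPattern 4 ![0,1,1,0] n).choose 2 ≤ n + maxPattern 4 ![0,1,1,0] n := by
    intro n
    obtain ⟨F, hF, hcard⟩ := Nat.sSup_mem (hnonempty n) (hbdd n)
    have h' := upper_bound F hF
    rw [hcard] at h'
    exact h'
  have hlower : ∀ n j : ℕ, (4 * j + 5) * (2 * j + 2) ≤ n →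
      4 * j + 5 ≤ maxPattern 4 ![0,1,1,0] n := by
    intro n j hj
    obtain ⟨F, hF, hcard⟩ := lower_bound hj
    exact le_csSup (hbdd n) ⟨F, hF, hcard⟩
  -- real upper bound
  have hub : ∀ n : ℕ, (maxPattern 4 ![0,1,1,0] n : ℝ) ≤ Real.sqrt (2 * n) + 3 := by
    intro n
    set M := maxPattern 4 ![0,1,1,0] n with hM
    have h1 : M * M ≤ 2 * n + 3 * M := by
      have h2 := hupper n
      rw [← hM] at h2
      have h3 := two_mul_choose_two M
      rcases Nat.eq_zero_or_pos M with h | h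
      · simp [h]
      · have h4 : M * (M - 1) + M = M * M := by
          cases M with
          | zero => simp
          | succ k => simp only [Nat.succ_sub_one]; ring
        omega
    have h5 : (M : ℝ) ^ 2 ≤ 2 * n + 3 * M := by
      have h5' := (Nat.cast_le (α := ℝ)).mpr h1
      push_cast at h5'
      nlinarith [h5']
    by_cases h6 : (M : ℝ) ≤ 3
    · have := Real.sqrt_nonneg (2 * (n : ℝ))
      push_cast at this
      linarith
    · push_neg at h6
      have h7 : ((M : ℝ) - 3) ^ 2 ≤ 2 * n := by nlinarith
      have h8 : (M : ℝ) - 3 ≤ Real.sqrt (2 * n) := by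
        calc (M : ℝ) - 3 = Real.sqrt (((M : ℝ) - 3) ^ 2) := (Real.sqrt_sq (by linarith)).symm
          _ ≤ Real.sqrt (2 * n) := Real.sqrt_le_sqrt h7
      linarith
  -- real lower bound
  have hlb : ∀ n : ℕ, 13 ≤ n → Real.sqrt (2 * n) - 4 ≤ (maxPattern 4 ![0,1,1,0] n : ℝ) := by
    intro n hn
    set s := Nat.sqrt (2 * n) with hs
    have hs5 : 5 ≤ s := Nat.le_sqrt.mpr (by omega)
    set j := (s - 5) / 4 with hj
    have key1 : 4 * j + 5 ≤ s := by omega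
    have key2 : (4 * j + 5) * (2 * j + 2) ≤ n := by
      have hss : s * s ≤ 2 * n := Nat.sqrt_le (2 * n)
      have hmul : (4 * j + 5) * (4 * j + 4) ≤ s * s :=
        Nat.mul_le_mul key1 (by omega)
      have hexp : (4 * j + 5) * (4 * j + 4) = 2 * ((4 * j + 5) * (2 * j + 2)) := by ring
      omega
    have h1 : 4 * j + 5 ≤ maxPattern 4 ![0,1,1,0] n := hlower n j key2
    have h2 : (s : ℝ) - 3 ≤ (maxPattern 4 ![0,1,1,0] n : ℝ) := by
      have hcast1 : (s : ℝ) ≤ ((4 * j + 5 : ℕ) : ℝ) + 3 := by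
        exact_mod_cast (by omega : s ≤ 4 * j + 5 + 3)
      have hcast2 : ((4 * j + 5 : ℕ) : ℝ) ≤ (maxPattern 4 ![0,1,1,0] n : ℝ) :=
        Nat.cast_le.mpr h1
      linarith
    have h3 : Real.sqrt (2 * n) ≤ (s : ℝ) + 1 := by
      have hlt : 2 * n < (s + 1) * (s + 1) := by
        simpa [Nat.succ_eq_add_one] using Nat.lt_succ_sqrt (2 * n)
      have hcast : (2 * (n : ℝ)) ≤ ((s : ℝ) + 1) ^ 2 := by
        have h' := (Nat.cast_le (α := ℝ)).mpr (Nat.le_of_lt hlt)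
        push_cast at h'
        nlinarith [h']
      calc Real.sqrt (2 * n) ≤ Real.sqrt (((s : ℝ) + 1) ^ 2) := Real.sqrt_le_sqrt hcast
        _ = (s : ℝ) + 1 := Real.sqrt_sq (by positivity)
    linarith
  -- squeeze
  have hinv : Filter.Tendsto (fun n : ℕ => (Real.sqrt (2 * n))⁻¹) Filter.atTop (nhds 0) :=
    sqrt2n_atTop.inv_tendsto_atTop
  have hgl : Filter.Tendsto (fun n : ℕ => 1 - 4 * (Real.sqrt (2 * n))⁻¹)
      Filter.atTop (nhds 1) := by
    have h' := Filter.Tendsto.const_mul (4 : ℝ) hinv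
    have h0 := Filter.Tendsto.sub (tendsto_const_nhds (x := (1 : ℝ)) (f := Filter.atTop)) h'
    simpa using h0
  have hgu : Filter.Tendsto (fun n : ℕ => 1 + 3 * (Real.sqrt (2 * n))⁻¹)
      Filter.atTop (nhds 1) := by
    have h' := Filter.Tendsto.const_mul (3 : ℝ) hinv
    have h0 := Filter.Tendsto.add (tendsto_const_nhds (x := (1 : ℝ)) (f := Filter.atTop)) h'
    simpa using h0
  apply tendsto_of_tendsto_of_tendsto_of_le_of_le' hgl hgu
  · filter_upwards [Filter.eventually_ge_atTop 13] with n hn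
    have hn1 : (13 : ℝ) ≤ (n : ℝ) := by exact_mod_cast hn
    have hpos : 0 < Real.sqrt (2 * n) := Real.sqrt_pos.mpr (by linarith)
    have hle := hlb n hn
    have heq : 1 - 4 * (Real.sqrt (2 * n))⁻¹ = (Real.sqrt (2 * n) - 4) / Real.sqrt (2 * n) := by
      field_simp
    rw [heq]
    gcongr
  · filter_upwards [Filter.eventually_ge_atTop 13] with n hn
    have hn1 : (13 : ℝ) ≤ (n : ℝ) := by exact_mod_cast hn
    have hpos : 0 < Real.sqrt (2 * n) := Real.sqrt_pos.mpr (by linarith)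
    have hle := hub n
    have heq : 1 + 3 * (Real.sqrt (2 * n))⁻¹ = (Real.sqrt (2 * n) + 3) / Real.sqrt (2 * n) := by
      field_simp
    rw [heq]
    gcongr
end

section
/- For every n ≥ 2, the maximum size of a family of subsets of [n] satisfying the (0,1,1)-intersection pattern modulo 2 equals n − 1; that is, f_{(0,1,1)}(n) = n − 1. -/
open Finset

namespace F011

variable {n : ℕ}

/-- Indicator vector of a finite set in `(ZMod 2)^n`. -/
def vv (A : Finset (Fin n)) : Fin n → ZMod 2 := fun x => if x ∈ A then 1 else 0

lemma vv_mul (A B : Finset (Fin n)) (x : Fin n) :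
    vv A x * vv B x = vv (A ∩ B) x := by
  simp only [vv, mem_inter]
  split_ifs <;> simp_all

lemma sum_vv (A : Finset (Fin n)) : ∑ x, vv A x = (A.card : ZMod 2) := by
  simp [vv, Finset.sum_boole]

lemma sum_vv_mul (A B : Finset (Fin n)) :
    ∑ x, vv A x * vv B x = ((A ∩ B).card : ZMod 2) := by
  simp only [vv_mul, sum_vv]

lemma sum_vv_mul3 (A B C : Finset (Fin n)) :
    ∑ x, vv A x * (vv B x * vv C x) = ((A ∩ (B ∩ C)).card : ZMod 2) := by
  simp only [vv_mul, sum_vv]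

section pattern

variable {F : Finset (Finset (Fin n))} (h : SatisfiesPattern n 3 ![0, 1, 1] F)
include h

lemma single {A : Finset (Fin n)} (hA : A ∈ F) : ((A.card : ZMod 2)) = 0 := by
  have := h 0 {A} (by simpa using hA) (by simp)
  simpa using this

lemma pair {A B : Finset (Fin n)} (hA : A ∈ F) (hB : B ∈ F) (hAB : A ≠ B) :
    (((A ∩ B).card : ZMod 2)) = 1 := by
  have := h 1 {A, B} (by simp [Finset.insert_subset_iff, hA, hB])
    (by rw [Finset.card_pair hAB]; decide)
  simpa [Finset.inf_insert] using this

lemma triple {A B C : Finset (Fin n)} (hA : A ∈ F) (hB : B ∈ F) (hC : C ∈ F)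
    (hAB : A ≠ B) (hAC : A ≠ C) (hBC : B ≠ C) :
    (((A ∩ (B ∩ C)).card : ZMod 2)) = 1 := by
  have := h 2 {A, B, C} (by simp [Finset.insert_subset_iff, hA, hB, hC])
    (by rw [Finset.card_insert_of_notMem (by simp [hAB, hAC]), Finset.card_pair hBC]; decide)
  simpa [Finset.inf_insert] using this

end pattern

lemma exchange {F : Finset (Finset (Fin n))} (g : {A // A ∈ F} → ZMod 2)
    (w : Fin n → ZMod 2) :
    ∑ x, (∑ A : {A // A ∈ F}, g A * vv A.1 x) * w x
      = ∑ A : {A // A ∈ F}, g A * ∑ x, vv A.1 x * w x := by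
  simp only [Finset.sum_mul, Finset.mul_sum, mul_assoc]
  exact Finset.sum_comm

lemma upper (hn : 2 ≤ n) (F : Finset (Finset (Fin n)))
    (h : SatisfiesPattern n 3 ![0, 1, 1] F) : F.card ≤ n - 1 := by
  by_cases hcard : F.card ≤ 1
  · omega
  push_neg at hcard
  obtain ⟨B, hB, C, hC, hBC⟩ := Finset.one_lt_card.mp hcard
  set ℓ : (Fin n → ZMod 2) →ₗ[ZMod 2] ZMod 2 := ∑ i, LinearMap.proj i with hℓ
  have hℓ_apply : ∀ x : Fin n → ZMod 2, ℓ x = ∑ i, x i := by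
    intro x; simp [hℓ]
  have hmem : ∀ A ∈ F, vv A ∈ LinearMap.ker ℓ := by
    intro A hA
    rw [LinearMap.mem_ker, hℓ_apply, sum_vv, single h hA]
  have hli : LinearIndependent (ZMod 2)
      (fun A : {A // A ∈ F} => (⟨vv A.1, hmem A.1 A.2⟩ : LinearMap.ker ℓ)) := by
    rw [Fintype.linearIndependent_iff]
    intro g hg
    have hg' : ∑ A : {A // A ∈ F}, g A • vv A.1 = 0 := by
      have := congrArg (Submodule.subtype (LinearMap.ker ℓ)) hg
      simpa using this
    have hpt : ∀ x, ∑ A : {A // A ∈ F}, g A * vv A.1 x = 0 := by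
      intro x
      have := congrFun hg' x
      simpa [smul_eq_mul] using this
    have hs : ∑ A : {A // A ∈ F}, g A = 0 := by
      have h1 : ∑ x, (∑ A : {A // A ∈ F}, g A * vv A.1 x) * (vv B x * vv C x) = 0 := by
        apply Finset.sum_eq_zero
        intro x _
        rw [hpt x, zero_mul]
      rw [exchange] at h1
      rw [← h1]
      apply Finset.sum_congr rfl
      intro A _
      have hval : ((A.1 ∩ (B ∩ C)).card : ZMod 2) = 1 := by
        rcases eq_or_ne A.1 B with rfl | hAB
        · rw [← Finset.inter_assoc, Finset.inter_self]
          exact pair h hB hC hBC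
        rcases eq_or_ne A.1 C with rfl | hAC
        · rw [Finset.inter_eq_right.mpr Finset.inter_subset_right]
          exact pair h hB hC hBC
        · exact triple h A.2 hB hC hAB hAC hBC
      rw [sum_vv_mul3, hval, mul_one]
    intro A
    have h2 : ∑ x, (∑ A' : {A // A ∈ F}, g A' * vv A'.1 x) * vv A.1 x = 0 := by
      apply Finset.sum_eq_zero
      intro x _
      rw [hpt x, zero_mul]
    rw [exchange] at h2
    have h3 : ∑ A' : {A // A ∈ F}, g A' * ((A'.1 ∩ A.1).card : ZMod 2)
        = ∑ A' : {A // A ∈ F}, (g A' - if A' = A then g A' else 0) := by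
      apply Finset.sum_congr rfl
      intro A' _
      rcases eq_or_ne A' A with rfl | hne
      · rw [Finset.inter_self]
        simp [single h A'.2]
      · rw [pair h A'.2 A.2 (fun h => hne (Subtype.ext h))]
        simp [hne]
    simp only [sum_vv_mul] at h2
    rw [h3, Finset.sum_sub_distrib, hs, Finset.sum_ite_eq' Finset.univ A g] at h2
    simpa using h2
  have hcount := hli.fintype_card_le_finrank
  rw [Fintype.card_coe] at hcount
  have hrange : LinearMap.range ℓ = ⊤ := by
    rw [LinearMap.range_eq_top]
    intro c
    refine ⟨Pi.single ⟨0, by omega⟩ c, ?_⟩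
    rw [hℓ_apply]
    simp [Finset.sum_pi_single']
  have hrk := LinearMap.finrank_range_add_finrank_ker ℓ
  rw [hrange, finrank_top, Module.finrank_self, Module.finrank_pi, Fintype.card_fin] at hrk
  omega

lemma lower (hn : 2 ≤ n) :
    ∃ G : Finset (Finset (Fin n)), SatisfiesPattern n 3 ![0, 1, 1] G ∧ G.card = n - 1 := by
  have hne : n - 1 < n := by omega
  set e : Fin n := ⟨n - 1, hne⟩ with he
  set G : Finset (Finset (Fin n)) :=
    (Finset.univ.erase e).image (fun i => ({i, e} : Finset (Fin n))) with hG
  have hmem2 : ∀ A ∈ G, e ∈ A ∧ A.card = 2 := by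
    intro A hA
    simp only [hG, mem_image, mem_erase] at hA
    obtain ⟨i, ⟨hi, -⟩, rfl⟩ := hA
    exact ⟨by simp, Finset.card_pair hi⟩
  have hpair : ∀ A ∈ G, ∀ B ∈ G, A ≠ B → A ∩ B = {e} := by
    intro A hA B hB hAB
    simp only [hG, mem_image, mem_erase] at hA hB
    obtain ⟨i, ⟨hi, -⟩, rfl⟩ := hA
    obtain ⟨j, ⟨hj, -⟩, rfl⟩ := hB
    have hij : i ≠ j := by rintro rfl; exact hAB rfl
    ext x
    simp only [mem_inter, mem_insert, mem_singleton]
    constructor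
    · rintro ⟨h1 | h1, h2 | h2⟩ <;> simp_all
    · rintro rfl; simp
  refine ⟨G, ?_, ?_⟩
  · intro i S hS hcard
    fin_cases i
    · obtain ⟨A, rfl⟩ := Finset.card_eq_one.mp hcard
      have hA := hmem2 A (hS (by simp))
      simp only [Finset.inf_singleton, id_eq, hA.2]
      decide
    · obtain ⟨A, B, hAB, rfl⟩ := Finset.card_eq_two.mp hcard
      have hiAB : A ∩ B = {e} :=
        hpair A (hS (by simp)) B (hS (by simp)) hAB
      simp only [Finset.inf_insert, Finset.inf_singleton, id_eq, Finset.inf_eq_inter]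
      rw [hiAB]
      simp
    · obtain ⟨A, B, C, hAB, hAC, hBC, rfl⟩ := Finset.card_eq_three.mp hcard
      have hiBC : B ∩ C = {e} :=
        hpair B (hS (by simp)) C (hS (by simp)) hBC
      have heA : e ∈ A := (hmem2 A (hS (by simp))).1
      have : A ∩ (B ∩ C) = {e} := by
        rw [hiBC]
        exact Finset.inter_singleton_of_mem heA
      simp only [Finset.inf_insert, Finset.inf_singleton, id_eq, Finset.inf_eq_inter]
      rw [this]
      simp
  · rw [hG]
    rw [Finset.card_image_of_injOn, Finset.card_erase_of_mem (by simp), Finset.card_univ,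
      Fintype.card_fin]
    intro i hi j hj hij
    simp only [mem_coe, mem_erase] at hi hj
    have hij' : ({i, e} : Finset (Fin n)) = {j, e} := hij
    have : i ∈ ({j, e} : Finset (Fin n)) := by rw [← hij']; simp
    simp only [mem_insert, mem_singleton] at this
    rcases this with rfl | rfl
    · rfl
    · exact absurd rfl hi.1

end F011

theorem f_011 (n : ℕ) (hn : 2 ≤ n) :
    maxPattern 3 ![0, 1, 1] n = n - 1 := by
  obtain ⟨G, hG, hGcard⟩ := F011.lower hn
  have hubd : ∀ m ∈ {m : ℕ | ∃ F : Finset (Finset (Fin n)),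
      SatisfiesPattern n 3 ![0, 1, 1] F ∧ F.card = m}, m ≤ n - 1 := by
    rintro m ⟨F, hF, rfl⟩
    exact F011.upper hn F hF
  apply le_antisymm
  · exact csSup_le ⟨n - 1, G, hG, hGcard⟩ hubd
  · exact le_csSup ⟨n - 1, hubd⟩ ⟨G, hG, hGcard⟩
end

section
/- (Dual eventown) For every n ≥ 1, the maximum size of a family of subsets of [n] satisfying the (1,1)-intersection pattern modulo 2 (all sets have odd size and all pairwise intersections of distinct sets have odd size) equals 2^{(n−1)/2} when n is odd and 2^{(n−2)/2} when n is even; that is, f_{(1,1)}(n) = 2^{⌊(n−1)/2⌋}. -/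
open Finset

namespace DualET
variable {n : ℕ}

noncomputable def B (n : ℕ) : LinearMap.BilinForm (ZMod 2) (Fin n → ZMod 2) :=
  LinearMap.mk₂ (ZMod 2) (fun x y => ∑ i, x i * y i)
    (fun x x' y => by simp [add_mul, Finset.sum_add_distrib])
    (fun c x y => by simp [Finset.mul_sum, mul_assoc])
    (fun x y y' => by simp [mul_add, Finset.sum_add_distrib])
    (fun c x y => by simp [Finset.mul_sum, mul_assoc, mul_left_comm])

@[simp] lemma B_apply (x y : Fin n → ZMod 2) : B n x y = ∑ i, x i * y i := rfl

lemma B_symm (x y : Fin n → ZMod 2) : B n x y = B n y x := by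
  simp [mul_comm]

lemma B_refl : (B n).IsRefl := fun x y h => by rw [B_symm]; exact h

lemma B_nondeg : (B n).Nondegenerate := by
  refine ⟨fun x h => ?_, fun x h => ?_⟩ <;>
  · funext i
    have := h (Pi.single i 1)
    simpa [Pi.single_apply, Finset.sum_ite_eq', Finset.sum_ite_eq] using this

def χ (A : Finset (Fin n)) : Fin n → ZMod 2 := fun i => if i ∈ A then 1 else 0

lemma B_chi (A C : Finset (Fin n)) : B n (χ A) (χ C) = ((A ∩ C).card : ZMod 2) := by
  have h : ∀ i, χ A i * χ C i = if i ∈ A ∩ C then (1 : ZMod 2) else 0 := by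
    intro i
    by_cases h1 : i ∈ A <;> by_cases h2 : i ∈ C <;> simp [χ, h1, h2]
  rw [B_apply, Finset.sum_congr rfl fun i _ => h i, Finset.sum_boole]
  congr 1
  rw [← Finset.filter_mem_eq_inter]
  congr 1
  ext x
  simp [Finset.mem_inter]

lemma chi_inj : Function.Injective (χ (n := n)) := by
  intro A C h
  ext i
  have := congrFun h i
  by_cases h1 : i ∈ A <;> by_cases h2 : i ∈ C <;> simp_all [χ]

lemma upper (hn : 1 ≤ n) (F : Finset (Finset (Fin n)))
    (hF : SatisfiesPattern n 2 ![1, 1] F) : F.card ≤ 2 ^ ((n - 1) / 2) := by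
  classical
  rcases F.eq_empty_or_nonempty with rfl | ⟨F0, hF0⟩
  · simp [Nat.pow_pos]
  -- all pairwise (incl. self) intersections have odd cardinality
  have hone : ∀ A ∈ F, ((A.card : ZMod 2)) = 1 := by
    intro A hA
    have := hF 0 {A} (by simpa using hA) (by simp)
    simpa using this
  have htwo : ∀ A ∈ F, ∀ C ∈ F, ((A ∩ C).card : ZMod 2) = 1 := by
    intro A hA C hC
    by_cases hAC : A = C
    · subst hAC; rw [Finset.inter_self]; exact hone A hA
    · have := hF 1 {A, C} (by
        intro x hx
        rcases Finset.mem_insert.mp hx with rfl | hx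
        · exact hA
        · rw [Finset.mem_singleton.mp hx]; exact hC)
        (by rw [Finset.card_pair hAC]; rfl)
      simpa [Finset.inf_insert, Finset.inf_eq_inter] using this
  have hBvv : ∀ A ∈ F, ∀ C ∈ F, B n (χ A) (χ C) = 1 := by
    intro A hA C hC; rw [B_chi]; exact htwo A hA C hC
  set v0 : Fin n → ZMod 2 := χ F0 with hv0def
  set u : Finset (Fin n) → (Fin n → ZMod 2) := fun A => χ A + v0 with hudef
  have hBu : ∀ A ∈ F, ∀ C ∈ F, B n (u A) (u C) = 0 := by
    intro A hA C hC
    simp only [hudef, map_add, LinearMap.add_apply]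
    rw [hBvv A hA C hC, hBvv A hA F0 hF0, hBvv F0 hF0 C hC, hBvv F0 hF0 F0 hF0]
    decide
  have hBv0u : ∀ A ∈ F, B n v0 (u A) = 0 := by
    intro A hA
    simp only [hudef, map_add]
    rw [hBvv F0 hF0 A hA, hBvv F0 hF0 F0 hF0]
    decide
  set U : Set (Fin n → ZMod 2) := u '' F with hUdef
  set W : Submodule (ZMod 2) (Fin n → ZMod 2) := Submodule.span (ZMod 2) U with hWdef
  set W' : Submodule (ZMod 2) (Fin n → ZMod 2) :=
    W ⊔ Submodule.span (ZMod 2) {v0} with hW'def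
  have hWle : W ≤ W' := le_sup_left
  have hmemW : ∀ A ∈ F, u A ∈ W := fun A hA =>
    Submodule.subset_span ⟨A, hA, rfl⟩
  -- W is contained in the orthogonal of W'
  have hperp : W ≤ (B n).orthogonal W' := by
    rw [hWdef, Submodule.span_le]
    rintro _ ⟨A, hA, rfl⟩
    rw [SetLike.mem_coe, LinearMap.BilinForm.mem_orthogonal_iff]
    intro w hw
    have hker : W' ≤ LinearMap.ker ((B n).flip (u A)) := by
      rw [hW'def]
      apply sup_le
      · rw [hWdef, Submodule.span_le]
        rintro _ ⟨C, hC, rfl⟩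
        simp only [SetLike.mem_coe, LinearMap.mem_ker, LinearMap.flip_apply]
        exact hBu C hC A hA
      · rw [Submodule.span_le, Set.singleton_subset_iff]
        simp only [SetLike.mem_coe, LinearMap.mem_ker, LinearMap.flip_apply]
        exact hBv0u A hA
    have := hker hw
    simpa [LinearMap.BilinForm.IsOrtho] using this
  have hBv0v0 : B n v0 v0 = 1 := hBvv F0 hF0 F0 hF0
  have hv0W : v0 ∉ W := by
    intro h
    have hker : W ≤ LinearMap.ker (B n v0) := by
      rw [hWdef, Submodule.span_le]
      rintro _ ⟨A, hA, rfl⟩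
      simpa using hBv0u A hA
    have h2 : B n v0 v0 = 0 := by
      have huF0 : u F0 ∈ W := hmemW F0 hF0
      have h3 : B n v0 (u F0) = 0 := hBv0u F0 hF0
      have hv0mem : v0 ∈ W := h
      have := hker hv0mem
      simpa using this
    rw [hBv0v0] at h2
    exact one_ne_zero h2
  have hv0ne : v0 ≠ 0 := by
    intro h
    rw [h] at hBv0v0
    simp at hBv0v0
  -- finrank computations
  have hVrank : Module.finrank (ZMod 2) (Fin n → ZMod 2) = n := by
    simp [Module.finrank_pi]
  have hdisj : W ⊓ Submodule.span (ZMod 2) {v0} = ⊥ := by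
    rw [← disjoint_iff]
    exact (Submodule.disjoint_span_singleton' hv0ne).mpr hv0W
  have hrankW' : Module.finrank (ZMod 2) W' = Module.finrank (ZMod 2) W + 1 := by
    rw [hW'def]
    have := Submodule.finrank_sup_add_finrank_inf_eq W (Submodule.span (ZMod 2) {v0})
    rw [hdisj, finrank_bot, finrank_span_singleton hv0ne] at this
    omega
  have horth : Module.finrank (ZMod 2) ((B n).orthogonal W') =
      n - Module.finrank (ZMod 2) W' := by
    rw [LinearMap.BilinForm.finrank_orthogonal B_nondeg W', hVrank]
  have hW'le : Module.finrank (ZMod 2) W' ≤ n := by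
    have h := Submodule.finrank_le W'
    rwa [hVrank] at h
  have hle : Module.finrank (ZMod 2) W ≤ Module.finrank (ZMod 2) ((B n).orthogonal W') :=
    Submodule.finrank_mono hperp
  have hd : Module.finrank (ZMod 2) W ≤ (n - 1) / 2 := by
    rw [Nat.le_div_iff_mul_le (by norm_num)]
    omega
  -- cardinality bound
  haveI : Fintype W := Fintype.ofFinite W
  have hinj : Set.InjOn u F := by
    intro A hA C hC h
    exact chi_inj (by simpa [hudef] using h)
  haveI : Fintype (W : Set (Fin n → ZMod 2)) := Fintype.ofFinite _
  have hcard1 : F.card ≤ Fintype.card W := by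
    rw [← Finset.card_image_of_injOn hinj]
    calc (F.image u).card ≤ (W : Set (Fin n → ZMod 2)).toFinset.card := by
          apply Finset.card_le_card
          intro x hx
          rcases Finset.mem_image.mp hx with ⟨A, hA, rfl⟩
          rw [Set.mem_toFinset]
          exact hmemW A hA
      _ = Fintype.card W := by rw [Set.toFinset_card]; rfl
  have hcardW : Fintype.card W = 2 ^ Module.finrank (ZMod 2) W := by
    rw [Module.card_eq_pow_finrank (K := ZMod 2) (V := W), ZMod.card]
  calc F.card ≤ Fintype.card W := hcard1
    _ = 2 ^ Module.finrank (ZMod 2) W := hcardW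
    _ ≤ 2 ^ ((n - 1) / 2) := Nat.pow_le_pow_right (by norm_num) hd



def pset (n : ℕ) (hn : 1 ≤ n) (T : Finset (Fin ((n - 1) / 2))) : Finset (Fin n) :=
  insert ⟨0, hn⟩ (T.biUnion fun i =>
    {⟨2 * i.val + 1, by have := i.isLt; have := Nat.div_mul_le_self (n-1) 2; omega⟩,
     ⟨2 * i.val + 2, by have := i.isLt; have := Nat.div_mul_le_self (n-1) 2; omega⟩})

lemma mem_pset (hn : 1 ≤ n) (T : Finset (Fin ((n - 1) / 2))) (x : Fin n) :
    x ∈ pset n hn T ↔ x.val = 0 ∨ ∃ i ∈ T, x.val = 2 * i.val + 1 ∨ x.val = 2 * i.val + 2 := by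
  simp only [pset, Finset.mem_insert, Finset.mem_biUnion, Finset.mem_singleton, Fin.ext_iff]

lemma pset_inter (hn : 1 ≤ n) (T T' : Finset (Fin ((n - 1) / 2))) :
    pset n hn T ∩ pset n hn T' = pset n hn (T ∩ T') := by
  ext x
  simp only [Finset.mem_inter, mem_pset]
  constructor
  · rintro ⟨h1 | ⟨i, hi, hxi⟩, h2⟩
    · exact Or.inl h1
    rcases h2 with h2 | ⟨j, hj, hxj⟩
    · omega
    have hij : i = j := by
      apply Fin.ext; omega
    subst hij
    exact Or.inr ⟨i, ⟨hi, hj⟩, hxi⟩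
  · rintro (h | ⟨i, ⟨hi, hi'⟩, hxi⟩)
    · exact ⟨Or.inl h, Or.inl h⟩
    · exact ⟨Or.inr ⟨i, hi, hxi⟩, Or.inr ⟨i, hi', hxi⟩⟩

lemma card_pset (hn : 1 ≤ n) (T : Finset (Fin ((n - 1) / 2))) :
    (pset n hn T).card = 2 * T.card + 1 := by
  have h0 : (⟨0, hn⟩ : Fin n) ∉ T.biUnion fun i =>
      ({⟨2 * i.val + 1, by have := i.isLt; have := Nat.div_mul_le_self (n-1) 2; omega⟩,
        ⟨2 * i.val + 2, by have := i.isLt; have := Nat.div_mul_le_self (n-1) 2; omega⟩} :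
        Finset (Fin n)) := by
    simp only [Finset.mem_biUnion, Finset.mem_insert, Finset.mem_singleton, Fin.ext_iff]
    push_neg
    intro i _
    omega
  have hdisj : ∀ i ∈ T, ∀ j ∈ T, i ≠ j → Disjoint
      (({⟨2 * i.val + 1, by have := i.isLt; have := Nat.div_mul_le_self (n-1) 2; omega⟩,
        ⟨2 * i.val + 2, by have := i.isLt; have := Nat.div_mul_le_self (n-1) 2; omega⟩} :
        Finset (Fin n)))
      (({⟨2 * j.val + 1, by have := j.isLt; have := Nat.div_mul_le_self (n-1) 2; omega⟩,
        ⟨2 * j.val + 2, by have := j.isLt; have := Nat.div_mul_le_self (n-1) 2; omega⟩} :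
        Finset (Fin n))) := by
    intro i _ j _ hij
    rw [Finset.disjoint_left]
    intro a ha ha'
    simp only [Finset.mem_insert, Finset.mem_singleton, Fin.ext_iff] at ha ha'
    have : i.val = j.val := by omega
    exact hij (Fin.ext this)
  rw [pset, Finset.card_insert_of_notMem h0, Finset.card_biUnion hdisj,
    Finset.sum_congr rfl (g := fun _ => 2)
      (fun i _ => Finset.card_pair ((by simp))),
    Finset.sum_const, smul_eq_mul]
  omega

lemma pset_subset (hn : 1 ≤ n) (T T' : Finset (Fin ((n - 1) / 2)))
    (h : pset n hn T = pset n hn T') : T ⊆ T' := by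
  intro i hi
  have hx : (⟨2 * i.val + 1, by have := i.isLt; have := Nat.div_mul_le_self (n-1) 2; omega⟩ : Fin n)
      ∈ pset n hn T := (mem_pset hn T _).mpr (Or.inr ⟨i, hi, Or.inl rfl⟩)
  rw [h, mem_pset] at hx
  rcases hx with h0 | ⟨j, hj, hxj⟩
  · simp at h0
  · have : i = j := by apply Fin.ext; simp at hxj; omega
    exact this ▸ hj

lemma pset_inj (hn : 1 ≤ n) : Function.Injective (pset n hn) := fun T T' h =>
  Finset.Subset.antisymm (pset_subset hn T T' h) (pset_subset hn T' T h.symm)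




lemma pset_odd (hn : 1 ≤ n) (T : Finset (Fin ((n - 1) / 2))) :
    (((pset n hn T).card : ZMod 2)) = 1 := by
  rw [card_pset]
  push_cast
  have h2 : (2 : ZMod 2) = 0 := rfl
  rw [h2]
  ring

lemma sat (hn : 1 ≤ n) :
    SatisfiesPattern n 2 ![1, 1] (Finset.univ.image (pset n hn)) := by
  intro i S hS hcard
  fin_cases i
  · obtain ⟨a, rfl⟩ := Finset.card_eq_one.mp hcard
    obtain ⟨T, _, rfl⟩ := Finset.mem_image.mp (hS (Finset.mem_singleton_self a))
    simpa using pset_odd hn T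
  · obtain ⟨a, b, hab, rfl⟩ := Finset.card_eq_two.mp hcard
    have ha := hS (Finset.mem_insert_self a {b})
    have hb := hS (Finset.mem_insert_of_mem (Finset.mem_singleton_self b))
    obtain ⟨T, _, rfl⟩ := Finset.mem_image.mp ha
    obtain ⟨T', _, rfl⟩ := Finset.mem_image.mp hb
    have : ({pset n hn T, pset n hn T'} : Finset (Finset (Fin n))).inf id
        = pset n hn (T ∩ T') := by
      rw [Finset.inf_insert, Finset.inf_singleton, id, id, Finset.inf_eq_inter, pset_inter]
    rw [this]
    simpa using pset_odd hn (T ∩ T')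

lemma lower (hn : 1 ≤ n) :
    (Finset.univ.image (pset n hn)).card = 2 ^ ((n - 1) / 2) := by
  rw [Finset.card_image_of_injective _ (pset_inj hn)]
  simp [Fintype.card_finset]


end DualET

/-- Dual eventown. -/
theorem f_11 (n : ℕ) (hn : 1 ≤ n) :
    maxPattern 2 ![1, 1] n = 2 ^ ((n - 1) / 2) := by
  apply IsGreatest.csSup_eq
  constructor
  · exact ⟨Finset.univ.image (DualET.pset n hn), DualET.sat hn, DualET.lower hn⟩
  · rintro m ⟨F, hF, rfl⟩
    exact DualET.upper hn F hF
end

section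
/- For every n ≥ 1, the maximum size of a family of subsets of [n] satisfying the (1,1,1)-intersection pattern modulo 2 equals 2^{(n−1)/2} when n is odd and 2^{(n−2)/2} when n is even; that is, f_{(1,1,1)}(n) = 2^{⌊(n−1)/2⌋}. -/
open Finset

namespace F111Aux
open Module

noncomputable def dotB (n : ℕ) : LinearMap.BilinForm (ZMod 2) (Fin n → ZMod 2) :=
  LinearMap.mk₂ (ZMod 2) (fun v w => ∑ i, v i * w i)
    (fun a b c => by simp [add_mul, Finset.sum_add_distrib])
    (fun r a b => by simp [Finset.mul_sum, mul_assoc])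
    (fun a b c => by simp [mul_add, Finset.sum_add_distrib])
    (fun r a b => by simp [Finset.mul_sum, mul_left_comm])

variable {n : ℕ}

lemma dotB_apply (v w : Fin n → ZMod 2) : dotB n v w = ∑ i, v i * w i := rfl

lemma dotB_comm (v w : Fin n → ZMod 2) : dotB n v w = dotB n w v := by
  simp [dotB_apply, mul_comm]

lemma dotB_refl : (dotB n).IsRefl := fun v w h => by rwa [dotB_comm]

lemma dotB_nondeg : (dotB n).Nondegenerate := by
  refine (LinearMap.IsRefl.nondegenerate_iff_separatingLeft dotB_refl).2 ?_
  intro v hv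
  funext j
  have := hv (Pi.single j 1)
  simpa [dotB_apply, Pi.single_apply, mul_ite, Finset.sum_ite_eq'] using this

def chi (A : Finset (Fin n)) : Fin n → ZMod 2 := fun x => if x ∈ A then 1 else 0

lemma chi_inj : Function.Injective (chi (n := n)) := by
  intro A B h
  ext x
  have := congrFun h x
  simp only [chi] at this
  by_cases hA : x ∈ A <;> by_cases hB : x ∈ B <;> simp_all

lemma dotB_chi (A B : Finset (Fin n)) : dotB n (chi A) (chi B) = ((A ∩ B).card : ZMod 2) := by
  rw [dotB_apply]
  have : ∀ x : Fin n, chi A x * chi B x = if x ∈ A ∩ B then (1 : ZMod 2) else 0 := by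
    intro x; simp only [chi, Finset.mem_inter]; split_ifs <;> simp_all
  rw [Finset.sum_congr rfl fun x _ => this x, Finset.sum_boole]
  congr 1
  rw [Finset.filter_univ_mem]

noncomputable def sumL (n : ℕ) : (Fin n → ZMod 2) →ₗ[ZMod 2] ZMod 2 where
  toFun v := ∑ i, v i
  map_add' a b := by simp [Finset.sum_add_distrib]
  map_smul' r a := by simp [Finset.mul_sum]

lemma dotB_self (v : Fin n → ZMod 2) : dotB n v v = sumL n v := by
  have h : ∀ a : ZMod 2, a * a = a := by decide
  simp [dotB_apply, sumL, h]

/-- Upper bound. -/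
lemma card_le (hn : 1 ≤ n) (F : Finset (Finset (Fin n)))
    (h : ∀ A ∈ F, ∀ B ∈ F, ((A ∩ B).card : ZMod 2) = 1) :
    F.card ≤ 2 ^ ((n - 1) / 2) := by
  rcases F.eq_empty_or_nonempty with rfl | ⟨F0, hF0⟩
  · simp
  set v0 : Fin n → ZMod 2 := chi F0 with hv0
  set w : Finset (Fin n) → (Fin n → ZMod 2) := fun A => chi A + v0 with hw
  set W : Submodule (ZMod 2) (Fin n → ZMod 2) := Submodule.span (ZMod 2) (w '' ↑F) with hW
  -- pairwise orthogonality of the generators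
  have hAB : ∀ A ∈ F, ∀ B ∈ F, dotB n (chi A) (chi B) = 1 := by
    intro A hA B hB; rw [dotB_chi]; exact h A hA B hB
  have hww : ∀ A ∈ F, ∀ B ∈ F, dotB n (w A) (w B) = 0 := by
    intro A hA B hB
    have : dotB n (w A) (w B)
        = dotB n (chi A) (chi B) + dotB n (chi A) v0 + (dotB n v0 (chi B) + dotB n v0 v0) := by
      simp only [hw, map_add, LinearMap.add_apply]
      ring
    rw [this, hAB A hA B hB, hAB A hA F0 hF0, hAB F0 hF0 B hB, hAB F0 hF0 F0 hF0]
    decide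
  have h0w : ∀ A ∈ F, dotB n v0 (w A) = 0 := by
    intro A hA
    have : dotB n v0 (w A) = dotB n v0 (chi A) + dotB n v0 v0 := by
      simp only [hw, map_add]
    rw [this, hAB F0 hF0 A hA, hAB F0 hF0 F0 hF0]; decide
  -- W is in the kernel of the sum functional
  have hWsum : W ≤ LinearMap.ker (sumL n) := by
    rw [hW, Submodule.span_le]
    rintro _ ⟨A, hA, rfl⟩
    simp only [SetLike.mem_coe, LinearMap.mem_ker]
    rw [← dotB_self]
    exact hww A hA A hA
  have hsum0 : sumL n v0 = 1 := by
    rw [← dotB_self]; exact hAB F0 hF0 F0 hF0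
  have hv0W : v0 ∉ W := fun hmem => by
    have := hWsum hmem
    rw [LinearMap.mem_ker, hsum0] at this
    exact one_ne_zero this
  have hv0ne : v0 ≠ 0 := fun h0 => by simp [h0, map_zero] at hsum0
  -- W is orthogonal to everything in U := W ⊔ span v0
  set U : Submodule (ZMod 2) (Fin n → ZMod 2) := W ⊔ Submodule.span (ZMod 2) {v0} with hU
  have key1 : ∀ A ∈ F, W ≤ LinearMap.ker (dotB n (w A)) := by
    intro A hA
    rw [hW, Submodule.span_le]
    rintro _ ⟨B, hB, rfl⟩
    simpa using hww A hA B hB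
  have key2 : W ≤ LinearMap.ker (dotB n v0) := by
    rw [hW, Submodule.span_le]
    rintro _ ⟨B, hB, rfl⟩
    simpa using h0w B hB
  have key3 : ∀ x ∈ W, ∀ y ∈ W, dotB n y x = 0 := by
    intro x hx
    intro y hy
    -- y ∈ W ≤ ker ((dotB n).flip x)
    have : W ≤ LinearMap.ker ((dotB n).flip x) := by
      rw [hW, Submodule.span_le]
      rintro _ ⟨B, hB, rfl⟩
      simp only [SetLike.mem_coe, LinearMap.mem_ker, LinearMap.flip_apply]
      exact (key1 B hB hx)
    simpa using this hy
  have hWU : W ≤ (dotB n).orthogonal U := by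
    intro x hx
    intro u hu
    rw [hU, Submodule.mem_sup] at hu
    obtain ⟨y, hy, z, hz, rfl⟩ := hu
    obtain ⟨c, rfl⟩ := Submodule.mem_span_singleton.mp hz
    show dotB n (y + c • v0) x = 0
    rw [map_add, map_smul]
    simp only [LinearMap.add_apply, LinearMap.smul_apply]
    rw [key3 x hx y hy]
    have : dotB n v0 x = 0 := by simpa using key2 hx
    rw [this]
    simp
  -- dimension counting
  have hinf : W ⊓ Submodule.span (ZMod 2) {v0} = ⊥ := by
    rw [eq_bot_iff]
    rintro x ⟨hxW, hxs⟩
    obtain ⟨c, rfl⟩ := Submodule.mem_span_singleton.mp hxs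
    have hc : c = 0 ∨ c = 1 := by
      have : ∀ d : ZMod 2, d = 0 ∨ d = 1 := by decide
      exact this c
    rcases hc with rfl | rfl
    · simp
    · rw [one_smul] at hxW; exact absurd hxW hv0W
  have hspan1 : finrank (ZMod 2) (Submodule.span (ZMod 2) {v0}) = 1 :=
    finrank_span_singleton hv0ne
  have hfinU : finrank (ZMod 2) U = finrank (ZMod 2) W + 1 := by
    have := Submodule.finrank_sup_add_finrank_inf_eq W (Submodule.span (ZMod 2) {v0})
    rw [hinf, hspan1, finrank_bot, add_zero] at this
    rw [hU, this]
  have hV : finrank (ZMod 2) (Fin n → ZMod 2) = n := by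
    simp [Module.finrank_pi]
  have hUle : finrank (ZMod 2) U ≤ n := le_trans (Submodule.finrank_le U) hV.le
  have horth : finrank (ZMod 2) ((dotB n).orthogonal U) = n - finrank (ZMod 2) U := by
    rw [LinearMap.BilinForm.finrank_orthogonal dotB_nondeg U, hV]
  have hWle : finrank (ZMod 2) W ≤ n - finrank (ZMod 2) U := by
    rw [← horth]
    exact Submodule.finrank_mono hWU
  have hdim : finrank (ZMod 2) W ≤ (n - 1) / 2 := by omega
  -- counting
  haveI : Fintype W := Fintype.ofFinite _
  have hcardW : Fintype.card W = 2 ^ finrank (ZMod 2) W := by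
    have := card_eq_pow_finrank (K := ZMod 2) (V := W)
    rwa [ZMod.card] at this
  have hinj : Function.Injective (fun A : {A // A ∈ F} =>
      (⟨w A.1, Submodule.subset_span ⟨A.1, A.2, rfl⟩⟩ : W)) := by
    rintro ⟨A, hA⟩ ⟨B, hB⟩ hEq
    simp only [Subtype.mk.injEq] at hEq ⊢
    have : chi A = chi B := by
      have := hEq
      simp only [hw] at this
      exact add_right_cancel this
    exact chi_inj this
  have : F.card ≤ Fintype.card W := by
    rw [← Fintype.card_coe]
    exact Fintype.card_le_of_injective _ hinj
  calc F.card ≤ 2 ^ finrank (ZMod 2) W := by rw [← hcardW]; exact this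
    _ ≤ 2 ^ ((n - 1) / 2) := Nat.pow_le_pow_right (by norm_num) hdim


variable {n m : ℕ}

/-- The building-block family: `gfun h S = {0} ∪ ⋃_{i ∈ S} {2i+1, 2i+2}`. -/
def gfun (h : 2 * m + 1 ≤ n) (S : Finset (Fin m)) : Finset (Fin n) :=
  insert ⟨0, by omega⟩
    (S.biUnion fun i => {⟨2 * i.val + 1, by have := i.isLt; omega⟩,
                         ⟨2 * i.val + 2, by have := i.isLt; omega⟩})

lemma mem_gfun (h : 2 * m + 1 ≤ n) (S : Finset (Fin m)) (x : Fin n) :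
    x ∈ gfun h S ↔ x.val = 0 ∨ ∃ i ∈ S, x.val = 2 * i.val + 1 ∨ x.val = 2 * i.val + 2 := by
  simp [gfun, Fin.ext_iff]

lemma gfun_inter (h : 2 * m + 1 ≤ n) (S T : Finset (Fin m)) :
    gfun h S ∩ gfun h T = gfun h (S ∩ T) := by
  ext x
  simp only [Finset.mem_inter, mem_gfun]
  constructor
  · rintro ⟨h0 | ⟨i, hi, hi'⟩, hT⟩
    · exact Or.inl h0
    rcases hT with h0 | ⟨j, hj, hj'⟩
    · omega
    have hij : i = j := by
      apply Fin.ext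
      omega
    subst hij
    exact Or.inr ⟨i, ⟨hi, hj⟩, hi'⟩
  · rintro (h0 | ⟨i, hi, hi'⟩)
    · exact ⟨Or.inl h0, Or.inl h0⟩
    exact ⟨Or.inr ⟨i, hi.1, hi'⟩, Or.inr ⟨i, hi.2, hi'⟩⟩

lemma gfun_card (h : 2 * m + 1 ≤ n) (S : Finset (Fin m)) :
    (gfun h S).card = 2 * S.card + 1 := by
  rw [gfun, Finset.card_insert_of_notMem, Finset.card_biUnion]
  · have : ∀ i ∈ S, ({⟨2 * i.val + 1, by have := i.isLt; omega⟩,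
        ⟨2 * i.val + 2, by have := i.isLt; omega⟩} : Finset (Fin n)).card = 2 := by
      intro i _
      rw [Finset.card_insert_of_notMem (by simp [Fin.ext_iff]), Finset.card_singleton]
    rw [Finset.sum_congr rfl this, Finset.sum_const, smul_eq_mul, mul_comm]
  · intro i _ j _ hij
    simp only [Finset.disjoint_insert_left, Finset.disjoint_singleton_left,
      Finset.mem_insert, Finset.mem_singleton, Fin.ext_iff]
    have : i.val ≠ j.val := fun hv => hij (Fin.ext hv)
    constructor <;> push_neg <;> constructor <;> simp <;> omega
  · simp only [Finset.mem_biUnion, Finset.mem_insert, Finset.mem_singleton, Fin.ext_iff]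
    push_neg
    intro i _
    constructor <;> simp <;> omega

lemma gfun_inj (h : 2 * m + 1 ≤ n) : Function.Injective (gfun h) := by
  intro S T hST
  ext i
  constructor <;> intro hi
  · have : (⟨2 * i.val + 1, by have := i.isLt; omega⟩ : Fin n) ∈ gfun h S :=
      (mem_gfun h S _).mpr (Or.inr ⟨i, hi, Or.inl rfl⟩)
    rw [hST, mem_gfun] at this
    rcases this with h0 | ⟨j, hj, hj'⟩
    · simp at h0
    · have : i = j := by apply Fin.ext; simp at hj' ⊢; omega
      exact this ▸ hj
  · have : (⟨2 * i.val + 1, by have := i.isLt; omega⟩ : Fin n) ∈ gfun h T :=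
      (mem_gfun h T _).mpr (Or.inr ⟨i, hi, Or.inl rfl⟩)
    rw [← hST, mem_gfun] at this
    rcases this with h0 | ⟨j, hj, hj'⟩
    · simp at h0
    · have : i = j := by apply Fin.ext; simp at hj' ⊢; omega
      exact this ▸ hj

/-- Intersections of nonempty subfamilies of the image family are of the form `gfun h A`. -/
lemma inf_gfun (h : 2 * m + 1 ≤ n) (S : Finset (Finset (Fin n)))
    (hS : S ⊆ Finset.univ.image (gfun h)) (hne : S.Nonempty) :
    ∃ A : Finset (Fin m), S.inf id = gfun h A := by
  induction S using Finset.induction_on with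
  | empty => exact absurd hne (by simp)
  | @insert B S' _ ih =>
    have hBmem : B ∈ Finset.univ.image (gfun h) := hS (Finset.mem_insert_self _ _)
    obtain ⟨A₀, _, rfl⟩ := Finset.mem_image.mp hBmem
    rcases S'.eq_empty_or_nonempty with rfl | hS'ne
    · exact ⟨A₀, by simp⟩
    · obtain ⟨A₁, hA₁⟩ := ih (fun x hx => hS (Finset.mem_insert_of_mem hx)) hS'ne
      refine ⟨A₀ ∩ A₁, ?_⟩
      rw [Finset.inf_insert, hA₁, id]
      rw [← gfun_inter]
      rfl


/-- From the pattern hypothesis, all (not necessarily distinct) pairwise intersections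
of members are odd. -/
lemma pairs_of_pattern {n : ℕ} (F : Finset (Finset (Fin n)))
    (hP : SatisfiesPattern n 3 ![1, 1, 1] F) :
    ∀ A ∈ F, ∀ B ∈ F, ((A ∩ B).card : ZMod 2) = 1 := by
  intro A hA B hB
  by_cases hAB : A = B
  · subst hAB
    rw [Finset.inter_self]
    have := hP 0 {A} (by simpa) (by simp)
    simpa using this
  · have := hP 1 {A, B} (by simp [Finset.insert_subset_iff, hA, hB])
      (by rw [Finset.card_pair hAB]; rfl)
    simpa [Finset.inf_insert] using this

/-- The constructed family satisfies the pattern. -/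
lemma pattern_gfun {n m : ℕ} (h : 2 * m + 1 ≤ n) :
    SatisfiesPattern n 3 ![1, 1, 1] (Finset.univ.image (gfun h)) := by
  intro i S hS hcard
  have hne : S.Nonempty := Finset.card_pos.mp (by omega)
  obtain ⟨A, hA⟩ := inf_gfun h S hS hne
  rw [hA, gfun_card]
  have hα : (![1, 1, 1] : Fin 3 → ZMod 2) i = 1 := by fin_cases i <;> rfl
  rw [hα]
  push_cast
  rw [show (2 : ZMod 2) = 0 from rfl]
  ring

end F111Aux

open F111Aux in
theorem f_111 (n : ℕ) (hn : 1 ≤ n) :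
    maxPattern 3 ![1, 1, 1] n = 2 ^ ((n - 1) / 2) := by
  have h2 : 2 * ((n - 1) / 2) + 1 ≤ n := by omega
  have hub : ∀ x ∈ {m : ℕ | ∃ F : Finset (Finset (Fin n)),
      SatisfiesPattern n 3 ![1, 1, 1] F ∧ F.card = m}, x ≤ 2 ^ ((n - 1) / 2) := by
    rintro x ⟨F, hF, rfl⟩
    exact card_le hn F (pairs_of_pattern F hF)
  have hmem : (2 : ℕ) ^ ((n - 1) / 2) ∈ {m : ℕ | ∃ F : Finset (Finset (Fin n)),
      SatisfiesPattern n 3 ![1, 1, 1] F ∧ F.card = m} := by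
    refine ⟨Finset.univ.image (gfun h2), pattern_gfun h2, ?_⟩
    rw [Finset.card_image_of_injective _ (gfun_inj h2), Finset.card_univ,
      Fintype.card_finset, Fintype.card_fin]
  unfold maxPattern
  exact le_antisymm (csSup_le ⟨_, hmem⟩ hub) (le_csSup ⟨_, hub⟩ hmem)
end

section
/- For every n ≥ 2, the maximum size of a family of subsets of [n] satisfying the (1,0,1)-intersection pattern modulo 2 equals n when n is even and equals n − 1 when n is odd; that is, f_{(1,0,1)}(n) = n for even n and f_{(1,0,1)}(n) = n − 1 for odd n ≥ 3. -/
open Finset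

namespace F101

variable {n : ℕ}

/-! ### Generalities -/

lemma mem_inf_id {S : Finset (Finset (Fin n))} {x : Fin n} :
    x ∈ S.inf id ↔ ∀ A ∈ S, x ∈ A := by
  classical
  induction S using Finset.induction_on with
  | empty => simp [Finset.inf_empty]
  | insert _ _ h ih => simp [Finset.inf_insert, Finset.inf_eq_inter, ih]

/-- The characteristic vector of a finite set, over `ZMod 2`. -/
def vec (A : Finset (Fin n)) : Fin n → ZMod 2 := fun t => if t ∈ A then 1 else 0

lemma vec_dot (A B : Finset (Fin n)) :
    ∑ t, vec A t * vec B t = ((A ∩ B).card : ZMod 2) := by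
  classical
  have : ∀ t, vec A t * vec B t = if t ∈ A ∩ B then (1 : ZMod 2) else 0 := by
    intro t
    simp only [vec, Finset.mem_inter, ite_and]
    by_cases hA : t ∈ A <;> by_cases hB : t ∈ B <;> simp [hA, hB]
  have h : Finset.univ.filter (fun x => x ∈ A ∧ x ∈ B) = A ∩ B := by ext x; simp
  simp [this, h]

lemma vec_sum (A : Finset (Fin n)) : ∑ t, vec A t = (A.card : ZMod 2) := by
  simp [vec]

/-! ### Consequences of the pattern -/

variable {F : Finset (Finset (Fin n))}

lemma h1 (hF : SatisfiesPattern n 3 ![1, 0, 1] F) {A : Finset (Fin n)} (hA : A ∈ F) :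
    (A.card : ZMod 2) = 1 := by
  have := hF 0 {A} (by simpa using hA) (by simp)
  simpa using this

lemma h2 (hF : SatisfiesPattern n 3 ![1, 0, 1] F) {A B : Finset (Fin n)} (hA : A ∈ F)
    (hB : B ∈ F) (hAB : A ≠ B) : ((A ∩ B).card : ZMod 2) = 0 := by
  classical
  have := hF 1 {A, B} (by simp [Finset.insert_subset_iff, hA, hB])
    (by rw [Finset.card_insert_of_notMem (by simpa using hAB), Finset.card_singleton]; rfl)
  simpa [Finset.inf_insert, Finset.inf_eq_inter] using this

lemma h3 (hF : SatisfiesPattern n 3 ![1, 0, 1] F) {A B C : Finset (Fin n)} (hA : A ∈ F)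
    (hB : B ∈ F) (hC : C ∈ F) (hAB : A ≠ B) (hAC : A ≠ C) (hBC : B ≠ C) :
    ((A ∩ (B ∩ C)).card : ZMod 2) = 1 := by
  classical
  have hcard : ({A, B, C} : Finset (Finset (Fin n))).card = 3 := by
    rw [Finset.card_insert_of_notMem (by simp [hAB, hAC]),
      Finset.card_insert_of_notMem (by simpa using hBC), Finset.card_singleton]
  have := hF 2 {A, B, C} (by simp [Finset.insert_subset_iff, hA, hB, hC]) hcard
  simpa [Finset.inf_insert, Finset.inf_eq_inter] using this

/-! ### Upper bound: linear independence -/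

lemma linindep (hF : SatisfiesPattern n 3 ![1, 0, 1] F) :
    LinearIndependent (ZMod 2) (fun A : ↥F => vec (A : Finset (Fin n))) := by
  classical
  rw [Fintype.linearIndependent_iff]
  intro g hg B
  have key : ∀ t, ∑ A ∈ F.attach, g A * vec (A : Finset (Fin n)) t = 0 := by
    intro t
    have := congrFun hg t
    simpa [Finset.sum_apply, Finset.univ_eq_attach] using this
  have main : ∑ A : ↥F, g A * (((A : Finset (Fin n)) ∩ (B : Finset (Fin n))).card : ZMod 2)
      = 0 := by
    calc ∑ A : ↥F, g A * (((A : Finset (Fin n)) ∩ (B : Finset (Fin n))).card : ZMod 2)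
        = ∑ A : ↥F, g A * ∑ t, vec (A : Finset (Fin n)) t * vec (B : Finset (Fin n)) t := by
          simp [vec_dot]
      _ = ∑ A : ↥F, ∑ t, g A * vec (A : Finset (Fin n)) t * vec (B : Finset (Fin n)) t := by
          simp [Finset.mul_sum, mul_assoc]
      _ = ∑ t, ∑ A : ↥F, g A * vec (A : Finset (Fin n)) t * vec (B : Finset (Fin n)) t :=
          Finset.sum_comm
      _ = ∑ t, (∑ A : ↥F, g A * vec (A : Finset (Fin n)) t) * vec (B : Finset (Fin n)) t := by
          simp [Finset.sum_mul]
      _ = 0 := by simp [key]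
  rw [Finset.sum_eq_single B (fun A _ hAB => by
    rw [h2 hF A.2 B.2 (fun h => hAB (Subtype.ext h)), mul_zero]) (by simp)] at main
  simpa [Finset.inter_self, h1 hF B.2] using main

lemma card_le (hF : SatisfiesPattern n 3 ![1, 0, 1] F) : F.card ≤ n := by
  have := (linindep hF).fintype_card_le_finrank
  rwa [Fintype.card_coe, Module.finrank_pi, Fintype.card_fin] at this

lemma cast_eq_one {m : ℕ} (h : m % 2 = 1) : (m : ZMod 2) = 1 := by
  rw [← ZMod.natCast_mod, h, Nat.cast_one]

lemma cast_eq_zero {m : ℕ} (h : m % 2 = 0) : (m : ZMod 2) = 0 := by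
  rw [← ZMod.natCast_mod, h, Nat.cast_zero]

/-! ### The odd case: a family of size `n` is impossible -/

lemma odd_ne (hodd : Odd n) (hn : 3 ≤ n) (hF : SatisfiesPattern n 3 ![1, 0, 1] F) :
    F.card ≠ n := by
  classical
  intro hcard
  obtain ⟨A, hA, B, hB, hAB⟩ := Finset.one_lt_card.mp (by omega : 1 < F.card)
  set x : Fin n → ZMod 2 := vec (A ∩ B) + (∑ C ∈ F, vec C) + vec A + vec B with hx
  let φ : (Fin n → ZMod 2) →ₗ[ZMod 2] ZMod 2 :=
    { toFun := fun y => ∑ t, x t * y t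
      map_add' := by intro y z; simp [mul_add, Finset.sum_add_distrib]
      map_smul' := by intro c y; simp [Finset.mul_sum, mul_left_comm, smul_eq_mul] }
  have expand : ∀ y : Fin n → ZMod 2, φ y
      = (∑ t, vec (A ∩ B) t * y t) + (∑ t, (∑ C ∈ F, vec C t) * y t)
        + (∑ t, vec A t * y t) + (∑ t, vec B t * y t) := by
    intro y
    show (∑ t, x t * y t) = _
    simp [hx, add_mul, Finset.sum_add_distrib, Finset.sum_apply]
  have mid : ∀ D : Finset (Fin n), (∑ t, (∑ C ∈ F, vec C t) * vec D t)
      = ∑ C ∈ F, ((C ∩ D).card : ZMod 2) := by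
    intro D
    calc ∑ t, (∑ C ∈ F, vec C t) * vec D t = ∑ t, ∑ C ∈ F, vec C t * vec D t := by
          simp [Finset.sum_mul]
      _ = ∑ C ∈ F, ∑ t, vec C t * vec D t := Finset.sum_comm
      _ = _ := by simp [vec_dot]
  have hker : ∀ D ∈ F, φ (vec D) = 0 := by
    intro D hD
    have hmidval : (∑ C ∈ F, ((C ∩ D).card : ZMod 2)) = 1 := by
      rw [Finset.sum_eq_single D (fun C hC hCD => h2 hF hC hD hCD) (by simp [hD])]
      simp [Finset.inter_self, h1 hF hD]
    rw [expand, mid, hmidval, vec_dot, vec_dot, vec_dot]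
    by_cases hDA : D = A
    · rw [hDA]
      have e1 : (A ∩ B) ∩ A = A ∩ B := by rw [Finset.inter_right_comm, Finset.inter_self]
      rw [e1, Finset.inter_self, h1 hF hA, h2 hF hA hB hAB, h2 hF hB hA (Ne.symm hAB)]
      decide
    · by_cases hDB : D = B
      · rw [hDB]
        have e1 : (A ∩ B) ∩ B = A ∩ B := by rw [Finset.inter_assoc, Finset.inter_self]
        rw [e1, Finset.inter_self, h1 hF hB, h2 hF hA hB hAB]
        decide
      · have e1 : (A ∩ B) ∩ D = A ∩ (B ∩ D) := Finset.inter_assoc A B D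
        rw [e1, h3 hF hA hB hD hAB (fun h => hDA h.symm) (fun h => hDB h.symm),
          h2 hF hA hD (fun h => hDA h.symm), h2 hF hB hD (fun h => hDB h.symm)]
        decide
  have hspan : Submodule.span (ZMod 2)
      (Set.range (fun A : ↥F => vec (A : Finset (Fin n)))) = ⊤ := by
    have : Nonempty ↥F := ⟨⟨A, hA⟩⟩
    exact (linindep hF).span_eq_top_of_card_eq_finrank
      (by rw [Fintype.card_coe, Module.finrank_pi, Fintype.card_fin, hcard])
  have hphi : φ (fun _ => 1) = 0 := by
    have hle : Submodule.span (ZMod 2)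
        (Set.range (fun A : ↥F => vec (A : Finset (Fin n)))) ≤ LinearMap.ker φ := by
      rw [Submodule.span_le]
      rintro _ ⟨C, rfl⟩
      exact hker _ C.2
    have hmem : (fun _ => (1 : ZMod 2)) ∈ Submodule.span (ZMod 2)
        (Set.range (fun A : ↥F => vec (A : Finset (Fin n)))) := by
      rw [hspan]; trivial
    exact hle hmem
  have hval : φ (fun _ => 1) = 1 := by
    rw [expand]
    simp only [mul_one]
    have m1 : (∑ t, (∑ C ∈ F, vec C t)) = (F.card : ZMod 2) := by
      rw [Finset.sum_comm]
      rw [Finset.sum_congr rfl fun C _ => vec_sum C]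
      rw [Finset.sum_congr rfl fun C hC => h1 hF hC]
      simp
    rw [vec_sum, vec_sum, vec_sum, m1, h1 hF hA, h1 hF hB, h2 hF hA hB hAB, hcard]
    obtain ⟨k, hk⟩ := hodd
    rw [cast_eq_one (by omega)]
    decide
  rw [hphi] at hval
  exact absurd hval.symm (by decide)

/-! ### Constructions -/

/-- The family of complements of `insert i E` for `i ∉ E`. -/
def fam (E : Finset (Fin n)) : Finset (Finset (Fin n)) :=
  Eᶜ.image (fun i => (insert i E)ᶜ)

lemma fam_injOn (E : Finset (Fin n)) : Set.InjOn (fun i => (insert i E)ᶜ) ↑Eᶜ := by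
  intro i hi j hj h
  simp only [Finset.coe_compl, Set.mem_compl_iff, Finset.mem_coe] at hi hj
  have hins : insert i E = insert j E := compl_injective h
  have := (Finset.ext_iff.mp hins i).mp (Finset.mem_insert_self i E)
  rcases Finset.mem_insert.mp this with h' | h'
  · exact h'
  · exact absurd h' hi

lemma fam_card (E : Finset (Fin n)) : (fam E).card = n - E.card := by
  rw [fam, Finset.card_image_of_injOn (fam_injOn E), Finset.card_compl, Fintype.card_fin]

lemma fam_inf (E : Finset (Fin n)) {S : Finset (Finset (Fin n))} (hS : S ⊆ fam E)
    (hne : S.Nonempty) : (S.inf id).card = n - E.card - S.card := by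
  classical
  obtain ⟨T, hTE, hTS⟩ := Finset.subset_image_iff.mp hS
  have hTne : T.Nonempty := Finset.image_nonempty.mp (hTS ▸ hne)
  have hTcard : T.card = S.card := by
    rw [← hTS]
    exact (Finset.card_image_of_injOn ((fam_injOn E).mono (by exact_mod_cast hTE))).symm
  have hdis : Disjoint T E := Finset.disjoint_left.mpr fun a ha => by
    have := hTE ha; simpa using this
  have hinf : S.inf id = (T ∪ E)ᶜ := by
    ext y
    rw [mem_inf_id]
    have hiff : (∀ A ∈ S, y ∈ A) ↔ ∀ i ∈ T, y ∉ insert i E := by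
      rw [← hTS]
      constructor
      · intro h i hi
        have := h _ (Finset.mem_image_of_mem _ hi)
        simpa using this
      · rintro h A hA
        obtain ⟨i, hi, rfl⟩ := Finset.mem_image.mp hA
        simpa using h i hi
    rw [hiff]
    simp only [Finset.mem_insert, not_or, Finset.mem_compl, Finset.mem_union]
    constructor
    · intro h
      obtain ⟨i, hi⟩ := hTne
      exact ⟨fun hyT => (h y hyT).1 rfl, (h i hi).2⟩
    · rintro ⟨hyT, hyE⟩ i hi
      exact ⟨fun h => hyT (h ▸ hi), hyE⟩
  rw [hinf, Finset.card_compl, Fintype.card_fin, Finset.card_union_of_disjoint hdis, hTcard]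
  omega

lemma empty_sat : SatisfiesPattern n 3 ![1, 0, 1] ∅ := by
  intro i S hS hc
  rw [Finset.subset_empty.mp hS] at hc
  simp at hc

lemma fam_sat (E : Finset (Fin n)) (hpar : (n - E.card) % 2 = 0) (hEn : E.card ≤ n) :
    SatisfiesPattern n 3 ![1, 0, 1] (fam E) := by
  intro i S hSsub hScard
  have hne : S.Nonempty := Finset.card_pos.mp (by omega)
  have hm : i.val + 1 ≤ n - E.card := by
    rw [← hScard, ← fam_card E]
    exact Finset.card_le_card hSsub
  rw [fam_inf E hSsub hne, hScard]
  fin_cases i <;> norm_num at hm ⊢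
  · exact cast_eq_one (by omega)
  · exact cast_eq_zero (by omega)
  · exact cast_eq_one (by omega)

end F101

theorem f_101 (n : ℕ) (hn : 2 ≤ n) :
    (Even n → maxPattern 3 ![1, 0, 1] n = n) ∧
    (Odd n → maxPattern 3 ![1, 0, 1] n = n - 1) := by
  classical
  have hbdd : BddAbove {m : ℕ | ∃ F : Finset (Finset (Fin n)),
      SatisfiesPattern n 3 ![1, 0, 1] F ∧ F.card = m} := by
    refine ⟨n, fun m hm => ?_⟩
    obtain ⟨F, hF, rfl⟩ := hm
    exact F101.card_le hF
  have hnonempty : {m : ℕ | ∃ F : Finset (Finset (Fin n)),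
      SatisfiesPattern n 3 ![1, 0, 1] F ∧ F.card = m}.Nonempty :=
    ⟨0, ∅, F101.empty_sat, Finset.card_empty⟩
  constructor
  · intro heven
    obtain ⟨k, hk⟩ := heven
    apply le_antisymm
    · exact csSup_le hnonempty (fun m hm => by
        obtain ⟨F, hF, rfl⟩ := hm; exact F101.card_le hF)
    · apply le_csSup hbdd
      refine ⟨F101.fam (∅ : Finset (Fin n)), F101.fam_sat ∅ (by simp; omega) (by simp), ?_⟩
      rw [F101.fam_card]
      simp
  · intro hodd
    obtain ⟨k, hk⟩ := hodd
    apply le_antisymm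
    · refine csSup_le hnonempty (fun m hm => ?_)
      obtain ⟨F, hF, rfl⟩ := hm
      have h1 := F101.card_le hF
      have h2 := F101.odd_ne ⟨k, hk⟩ (by omega) hF
      omega
    · apply le_csSup hbdd
      have hL : (1 : ℕ) ≤ n := by omega
      refine ⟨F101.fam ({⟨n - 1, by omega⟩} : Finset (Fin n)),
        F101.fam_sat _ (by simp; omega) (by simp; omega), ?_⟩
      rw [F101.fam_card]
      simp
end

section
/- For every n ≥ 1, the maximum size of a family of subsets of [n] satisfying the (0,1,0)-intersection pattern modulo 2 equals n when n is odd and equals n − 1 when n is even; that is, f_{(0,1,0)}(n) = n for odd n and f_{(0,1,0)}(n) = n − 1 for even n. -/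
open Finset

/-! ### Auxiliary lemmas -/

lemma cast_even (k : ℕ) (h : k % 2 = 0) : ((k : ℕ) : ZMod 2) = 0 := by
  rw [← ZMod.natCast_mod, h]; norm_num

lemma cast_odd (k : ℕ) (h : k % 2 = 1) : ((k : ℕ) : ZMod 2) = 1 := by
  rw [← ZMod.natCast_mod, h]; norm_num

set_option maxHeartbeats 1000000 in
/-- The lower-bound construction: the family of complements of `insert i T` for `i ∉ T`. -/
lemma lower_aux (n : ℕ) (T : Finset (Fin n)) (hpar : (n - T.card) % 2 = 1) :
    SatisfiesPattern n 3 ![0, 1, 0] (Tᶜ.image (fun i => (insert i T)ᶜ)) ∧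
    (Tᶜ.image (fun i => (insert i T)ᶜ)).card = n - T.card := by
  have hTn : T.card ≤ n := by simpa using T.card_le_univ
  have hinj : ∀ i, i ∉ T → ∀ j, j ∉ T → (insert i T)ᶜ = (insert j T)ᶜ → i = j := by
    intro i hi j hj h
    have h2 : insert i T = insert j T := by
      have := congrArg compl h; simpa using this
    have : i ∈ insert j T := h2 ▸ mem_insert_self i T
    rcases mem_insert.mp this with h | h
    · exact h
    · exact absurd h hi
  constructor
  · intro i S hS hcard
    have hmem : ∀ a ∈ S, ∃ x, x ∉ T ∧ (insert x T)ᶜ = a := by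
      intro a ha
      obtain ⟨x, hx, hxa⟩ := mem_image.mp (hS ha)
      exact ⟨x, by simpa using hx, hxa⟩
    fin_cases i
    · -- singles: size n - |T| - 1, even
      obtain ⟨a, rfl⟩ := card_eq_one.mp hcard
      obtain ⟨x, hx, rfl⟩ := hmem a (mem_singleton_self a)
      have hx' : T.card < n := by
        have : (insert x T).card ≤ n := by simpa using (insert x T).card_le_univ
        rw [card_insert_of_notMem hx] at this; omega
      simp only [inf_eq_inter, inf_singleton, id_eq, card_compl,
        card_insert_of_notMem hx, Fintype.card_fin]
      rw [cast_even _ (by omega)]; decide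
    · -- pairs: size n - |T| - 2, odd
      obtain ⟨a, b, hab, rfl⟩ := card_eq_two.mp hcard
      obtain ⟨x, hx, rfl⟩ := hmem a (by simp)
      obtain ⟨y, hy, rfl⟩ := hmem b (by simp)
      have hxy : x ≠ y := fun h => hab (by rw [h])
      have hunion : (insert x T)ᶜ ∩ (insert y T)ᶜ = (insert x (insert y T))ᶜ := by
        rw [← compl_union]; congr 1
        ext w; simp only [mem_union, mem_insert]; tauto
      have hcard2 : (insert x (insert y T)).card = T.card + 2 := by
        rw [card_insert_of_notMem (by simp [hx, hxy]), card_insert_of_notMem hy]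
      have hle : T.card + 2 ≤ n := by
        have := (insert x (insert y T)).card_le_univ
        rw [hcard2] at this; simpa using this
      simp only [inf_insert, inf_eq_inter, inf_singleton, id_eq, hunion, card_compl,
        Fintype.card_fin, hcard2]
      rw [cast_odd _ (by omega)]
      decide
    · -- triples: size n - |T| - 3, even
      obtain ⟨a, b, c, hab, hac, hbc, rfl⟩ := card_eq_three.mp hcard
      obtain ⟨x, hx, rfl⟩ := hmem a (by simp)
      obtain ⟨y, hy, rfl⟩ := hmem b (by simp)
      obtain ⟨z, hz, rfl⟩ := hmem c (by simp)
      have hxy : x ≠ y := fun h => hab (by rw [h])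
      have hxz : x ≠ z := fun h => hac (by rw [h])
      have hyz : y ≠ z := fun h => hbc (by rw [h])
      have hunion : (insert x T)ᶜ ∩ ((insert y T)ᶜ ∩ (insert z T)ᶜ) =
          (insert x (insert y (insert z T)))ᶜ := by
        rw [← compl_union, ← compl_union]; congr 1
        ext w; simp only [mem_union, mem_insert]; tauto
      have hcard3 : (insert x (insert y (insert z T))).card = T.card + 3 := by
        rw [card_insert_of_notMem (by simp [hx, hxy, hxz]),
            card_insert_of_notMem (by simp [hy, hyz]), card_insert_of_notMem hz]
      have hle : T.card + 3 ≤ n := by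
        have := (insert x (insert y (insert z T))).card_le_univ
        rw [hcard3] at this; simpa using this
      simp only [inf_insert, inf_eq_inter, inf_singleton, id_eq, hunion, card_compl,
        Fintype.card_fin, hcard3]
      rw [cast_even _ (by omega)]
      decide
  · rw [card_image_of_injOn (fun i hi j hj => hinj i (by simpa using hi) j (by simpa using hj)),
        card_compl, Fintype.card_fin]

/-! ### Indicator vectors and dot products -/

def ind {n : ℕ} (A : Finset (Fin n)) : Fin n → ZMod 2 := fun x => if x ∈ A then 1 else 0

def dotp {n : ℕ} (f g : Fin n → ZMod 2) : ZMod 2 := ∑ x, f x * g x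

lemma dotp_ind {n : ℕ} (A B : Finset (Fin n)) : dotp (ind A) (ind B) = ((A ∩ B).card : ZMod 2) := by
  have h : ∀ x, ind A x * ind B x = if x ∈ A ∩ B then 1 else 0 := fun x => by
    by_cases hA : x ∈ A <;> by_cases hB : x ∈ B <;> simp [ind, hA, hB, mem_inter]
  have h2 : filter (fun x => x ∈ A ∩ B) univ = A ∩ B := by ext x; simp
  unfold dotp
  simp_rw [h]
  rw [Finset.sum_boole, h2]

lemma dotp_sum {n : ℕ} {ι : Type*} [Fintype ι] (f : ι → (Fin n → ZMod 2)) (g : ι → ZMod 2)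
    (w : Fin n → ZMod 2) : dotp (∑ i, g i • f i) w = ∑ i, g i * dotp (f i) w := by
  unfold dotp
  simp only [Finset.sum_apply, Pi.smul_apply, smul_eq_mul, Finset.sum_mul]
  rw [Finset.sum_comm]
  simp [Finset.mul_sum, mul_assoc]

def vfam {n : ℕ} (A : Finset (Fin n)) (F : Finset (Finset (Fin n))) :
    (↥(F.erase A) ⊕ ↥(Aᶜ)) → (Fin n → ZMod 2)
  | .inl B => ind (A ∩ B.val)
  | .inr x => ind {x.val}

lemma vfam_li {n : ℕ} (A : Finset (Fin n)) (F : Finset (Finset (Fin n)))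
    (hp : ∀ B ∈ F.erase A, ((A ∩ B).card : ZMod 2) = 1)
    (ht : ∀ B ∈ F.erase A, ∀ C ∈ F.erase A, B ≠ C → ((A ∩ (B ∩ C)).card : ZMod 2) = 0) :
    LinearIndependent (ZMod 2) (vfam A F) := by
  rw [Fintype.linearIndependent_iff]
  intro g hsum
  -- step 1 : coefficients on the inl part vanish
  have step1 : ∀ B : ↥(F.erase A), g (Sum.inl B) = 0 := by
    intro B
    have hdot := congrArg (fun f => dotp f (ind (A ∩ B.val))) hsum
    simp only [dotp_sum] at hdot
    have hzero : dotp (0 : Fin n → ZMod 2) (ind (A ∩ B.val)) = 0 := by simp [dotp]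
    rw [hzero] at hdot
    have hz : ∀ i, i ≠ Sum.inl B → g i * dotp (vfam A F i) (ind (A ∩ B.val)) = 0 := by
      rintro (⟨B', hB'⟩ | ⟨x, hx⟩) hne
      · have hBB : B' ≠ B.val := by
          intro h
          exact hne (by apply congrArg; exact Subtype.ext h)
        show g _ * dotp (ind (A ∩ B')) (ind (A ∩ B.val)) = 0
        rw [dotp_ind]
        have hset : (A ∩ B') ∩ (A ∩ B.val) = A ∩ (B' ∩ B.val) := by
          ext y; simp only [mem_inter]; tauto
        rw [hset, ht B' hB' B.val B.prop hBB, mul_zero]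
      · show g _ * dotp (ind {x}) (ind (A ∩ B.val)) = 0
        rw [dotp_ind]
        have hset : ({x} : Finset (Fin n)) ∩ (A ∩ B.val) = ∅ := by
          apply eq_empty_of_forall_notMem
          intro y hy
          rw [mem_inter, mem_singleton, mem_inter] at hy
          exact (mem_compl.mp hx) (hy.1 ▸ hy.2.1)
        rw [hset]
        simp
    rw [Fintype.sum_eq_single _ hz] at hdot
    have hself : dotp (vfam A F (Sum.inl B)) (ind (A ∩ B.val)) = 1 := by
      show dotp (ind (A ∩ B.val)) (ind (A ∩ B.val)) = 1
      rw [dotp_ind, inter_self]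
      exact hp B.val B.prop
    rw [hself, mul_one] at hdot
    exact hdot
  -- step 2 : coefficients on the inr part vanish
  have step2 : ∀ x : ↥(Aᶜ), g (Sum.inr x) = 0 := by
    intro x
    have hev := congrFun hsum x.val
    simp only [Finset.sum_apply, Pi.smul_apply, smul_eq_mul, Pi.zero_apply] at hev
    have hz : ∀ i, i ≠ Sum.inr x → g i * (vfam A F i) x.val = 0 := by
      rintro (⟨B', hB'⟩ | ⟨y, hy⟩) hne
      · show g _ * ind (A ∩ B') x.val = 0
        have : ind (A ∩ B') x.val = 0 := by
          simp only [ind, mem_inter, ite_eq_right_iff, and_imp]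
          intro hxA _
          exact absurd hxA (mem_compl.mp x.prop)
        rw [this, mul_zero]
      · show g _ * ind {y} x.val = 0
        have hyx : x.val ≠ y := by
          intro h
          exact hne (by apply congrArg; exact Subtype.ext h.symm)
        have : ind {y} x.val = 0 := by simp [ind, hyx]
        rw [this, mul_zero]
    rw [Fintype.sum_eq_single _ hz] at hev
    have : vfam A F (Sum.inr x) x.val = 1 := by
      show ind {x.val} x.val = 1
      simp [ind]
    rw [this, mul_one] at hev
    exact hev
  rintro (B | x)
  · exact step1 B
  · exact step2 x

/-! ### Extracting the pattern conditions -/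

lemma pat_single {n : ℕ} {F : Finset (Finset (Fin n))} (hF : SatisfiesPattern n 3 ![0,1,0] F)
    {B : Finset (Fin n)} (hB : B ∈ F) : ((B.card : ZMod 2)) = 0 := by
  have := hF ⟨0, by norm_num⟩ {B} (by simpa using hB) (by simp)
  simpa using this

lemma pat_pair {n : ℕ} {F : Finset (Finset (Fin n))} (hF : SatisfiesPattern n 3 ![0,1,0] F)
    {B C : Finset (Fin n)} (hB : B ∈ F) (hC : C ∈ F) (hBC : B ≠ C) :
    (((B ∩ C).card : ZMod 2)) = 1 := by
  have hcard : ({B, C} : Finset (Finset (Fin n))).card = 2 := by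
    rw [card_insert_of_notMem (by simpa using hBC), card_singleton]
  have := hF ⟨1, by norm_num⟩ {B, C} (by simp [insert_subset_iff, hB, hC]) hcard
  simp only [inf_insert, inf_singleton, id_eq, inf_eq_inter] at this
  rw [this]; decide

lemma pat_triple {n : ℕ} {F : Finset (Finset (Fin n))} (hF : SatisfiesPattern n 3 ![0,1,0] F)
    {B C D : Finset (Fin n)} (hB : B ∈ F) (hC : C ∈ F) (hD : D ∈ F)
    (hBC : B ≠ C) (hBD : B ≠ D) (hCD : C ≠ D) :
    (((B ∩ (C ∩ D)).card : ZMod 2)) = 0 := by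
  have hcard : ({B, C, D} : Finset (Finset (Fin n))).card = 3 := by
    rw [card_insert_of_notMem (by simp [hBC, hBD]),
        card_insert_of_notMem (by simpa using hCD), card_singleton]
  have := hF ⟨2, by norm_num⟩ {B, C, D} (by simp [insert_subset_iff, hB, hC, hD]) hcard
  simp only [inf_insert, inf_singleton, id_eq, inf_eq_inter] at this
  rw [this]; decide

/-! ### The upper bound -/

lemma upper_aux {n : ℕ} {F : Finset (Finset (Fin n))} (hF : SatisfiesPattern n 3 ![0,1,0] F)
    (h2 : 2 ≤ F.card) :
    ∃ A ∈ F, F.card ≤ A.card + 1 ∧ A.card % 2 = 0 ∧ A.card < n := by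
  obtain ⟨A, hA⟩ := Finset.card_pos.mp (show 0 < F.card by omega)
  refine ⟨A, hA, ?_, ?_, ?_⟩
  · -- via linear independence
    have hp : ∀ B ∈ F.erase A, ((A ∩ B).card : ZMod 2) = 1 := by
      intro B hB
      exact pat_pair hF hA (mem_of_mem_erase hB) (ne_of_mem_erase hB).symm
    have ht : ∀ B ∈ F.erase A, ∀ C ∈ F.erase A, B ≠ C →
        ((A ∩ (B ∩ C)).card : ZMod 2) = 0 := by
      intro B hB C hC hBC
      exact pat_triple hF hA (mem_of_mem_erase hB) (mem_of_mem_erase hC)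
        (ne_of_mem_erase hB).symm (ne_of_mem_erase hC).symm hBC
    have li := vfam_li A F hp ht
    have hb := LinearIndependent.fintype_card_le_finrank li
    rw [Fintype.card_sum, Fintype.card_coe, Fintype.card_coe] at hb
    have hfr : Module.finrank (ZMod 2) (Fin n → ZMod 2) = n := by simp
    rw [hfr, card_erase_of_mem hA, card_compl, Fintype.card_fin] at hb
    have hAn : A.card ≤ n := by simpa using A.card_le_univ
    omega
  · -- |A| is even
    have := pat_single hF hA
    have := (ZMod.natCast_eq_zero_iff A.card 2).mp this
    omega
  · -- |A| < n
    by_contra h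
    have hAn : A.card ≤ n := by simpa using A.card_le_univ
    have hAuniv : A = univ := Finset.eq_univ_of_card A (by rw [Fintype.card_fin]; omega)
    obtain ⟨B, hB, hBA⟩ := Finset.exists_mem_ne (show 1 < F.card by omega) A
    have h1 := pat_pair hF hA hB (Ne.symm hBA)
    rw [hAuniv, univ_inter] at h1
    have h0 := pat_single hF hB
    rw [h0] at h1
    exact absurd h1 (by decide)

/-! ### The main theorem -/

theorem f_010 (n : ℕ) (hn : 1 ≤ n) :
    (Odd n → maxPattern 3 ![0, 1, 0] n = n) ∧
    (Even n → maxPattern 3 ![0, 1, 0] n = n - 1) := by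
  constructor
  · -- odd case
    intro hodd
    have hodd' : n % 2 = 1 := Nat.odd_iff.mp hodd
    -- upper bound for all members
    have hub : ∀ m ∈ {m : ℕ | ∃ F : Finset (Finset (Fin n)),
        SatisfiesPattern n 3 ![0,1,0] F ∧ F.card = m}, m ≤ n := by
      rintro m ⟨F, hF, rfl⟩
      by_cases h2 : 2 ≤ F.card
      · obtain ⟨A, _, hc, hpar, hlt⟩ := upper_aux hF h2
        omega
      · omega
    -- lower bound: the construction with T = ∅
    have hmem : n ∈ {m : ℕ | ∃ F : Finset (Finset (Fin n)),
        SatisfiesPattern n 3 ![0,1,0] F ∧ F.card = m} := by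
      obtain ⟨hsat, hcard⟩ := lower_aux n ∅ (by simpa using hodd')
      exact ⟨_, hsat, by simpa using hcard⟩
    exact le_antisymm (csSup_le ⟨n, hmem⟩ hub) (le_csSup ⟨n, hub⟩ hmem)
  · -- even case
    intro heven
    have heven' : n % 2 = 0 := Nat.even_iff.mp heven
    have hub : ∀ m ∈ {m : ℕ | ∃ F : Finset (Finset (Fin n)),
        SatisfiesPattern n 3 ![0,1,0] F ∧ F.card = m}, m ≤ n - 1 := by
      rintro m ⟨F, hF, rfl⟩
      by_cases h2 : 2 ≤ F.card
      · obtain ⟨A, _, hc, hpar, hlt⟩ := upper_aux hF h2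
        omega
      · omega
    have hmem : n - 1 ∈ {m : ℕ | ∃ F : Finset (Finset (Fin n)),
        SatisfiesPattern n 3 ![0,1,0] F ∧ F.card = m} := by
      have hx : ((⟨0, by omega⟩ : Fin n) : Fin n) ∈ (univ : Finset (Fin n)) := mem_univ _
      obtain ⟨hsat, hcard⟩ := lower_aux n {⟨0, by omega⟩} (by simp; omega)
      refine ⟨_, hsat, ?_⟩
      rw [hcard, card_singleton]
    exact le_antisymm (csSup_le ⟨n - 1, hmem⟩ hub) (le_csSup ⟨n - 1, hub⟩ hmem)
end

section
/- Let F be a family of subsets of [n] satisfying the (1,1,0)-intersection pattern modulo 2 and let F_i ∈ F. Then |F| − 1 ≤ |F_i|. -/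
open Finset

theorem lemma_110_sets (n : ℕ) (F : Finset (Finset (Fin n)))
    (hF : SatisfiesPattern n 3 ![1, 1, 0] F) (A : Finset (Fin n)) (hA : A ∈ F) :
    F.card - 1 ≤ A.card := by
  classical
  have key : ∀ B C : ↥(F.erase A),
      ((((B : Finset (Fin n)) ∩ (C : Finset (Fin n)) ∩ A).card : ZMod 2))
        = if B = C then 1 else 0 := by
    rintro ⟨B, hB⟩ ⟨C, hC⟩
    rw [Finset.mem_erase] at hB hC
    simp only [Subtype.mk.injEq]
    by_cases hBC : B = C
    · subst hBC
      rw [if_pos rfl, Finset.inter_self]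
      have h2 : ({B, A} : Finset (Finset (Fin n))).card = (1 : Fin 3).val + 1 := by
        rw [Finset.card_insert_of_notMem (by simp [hB.1]), Finset.card_singleton]; decide
      have := hF 1 {B, A} (by
        intro x hx
        simp only [Finset.mem_insert, Finset.mem_singleton] at hx
        rcases hx with h | h <;> simp [h, hB.2, hA]) h2
      simp only [Finset.inf_insert, Finset.inf_singleton, id, Finset.inf_eq_inter] at this
      rw [this]
      decide
    · rw [if_neg hBC]
      have h3 : ({B, C, A} : Finset (Finset (Fin n))).card = (2 : Fin 3).val + 1 := by
        rw [Finset.card_insert_of_notMem (by simp [hBC, hB.1]),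
          Finset.card_insert_of_notMem (by simp [hC.1]), Finset.card_singleton]; decide
      have := hF 2 {B, C, A} (by
        intro x hx
        simp only [Finset.mem_insert, Finset.mem_singleton] at hx
        rcases hx with h | h | h <;> simp [h, hB.2, hC.2, hA]) h3
      simp only [Finset.inf_insert, Finset.inf_singleton, id, Finset.inf_eq_inter] at this
      rw [← Finset.inter_assoc] at this
      rw [this]
      decide
  let M : Matrix (↥(F.erase A)) (↥A) (ZMod 2) :=
    fun B x => if (x : Fin n) ∈ (B : Finset (Fin n)) then 1 else 0
  have hMM : M * M.transpose = 1 := by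
    ext B C
    simp only [Matrix.mul_apply, Matrix.transpose_apply]; simp only [M]
    have hstep : ∀ x : ↥A,
        (if (x : Fin n) ∈ (B : Finset (Fin n)) then (1 : ZMod 2) else 0) *
          (if (x : Fin n) ∈ (C : Finset (Fin n)) then 1 else 0)
          = if (x : Fin n) ∈ (B : Finset (Fin n)) ∩ (C : Finset (Fin n)) then 1 else 0 := by
      intro x
      by_cases h1 : (x : Fin n) ∈ (B : Finset (Fin n)) <;>
        by_cases h2 : (x : Fin n) ∈ (C : Finset (Fin n)) <;> simp [h1, h2]
    rw [Finset.sum_congr rfl (fun x _ => hstep x)]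
    rw [Finset.sum_coe_sort A
      (fun x => if x ∈ (B : Finset (Fin n)) ∩ (C : Finset (Fin n)) then (1 : ZMod 2) else 0)]
    rw [Finset.sum_boole]
    have hfc : A.filter (fun x => x ∈ (B : Finset (Fin n)) ∩ (C : Finset (Fin n)))
        = (B : Finset (Fin n)) ∩ (C : Finset (Fin n)) ∩ A := by
      ext x
      simp only [Finset.mem_filter, Finset.mem_inter]
      tauto
    rw [hfc, key B C, Matrix.one_apply]
  have hrank1 : (1 : Matrix (↥(F.erase A)) (↥(F.erase A)) (ZMod 2)).rank
      = Fintype.card ↥(F.erase A) := Matrix.rank_one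
  have hle1 : (M * M.transpose).rank ≤ M.rank := Matrix.rank_mul_le_left M M.transpose
  have hle2 : M.rank ≤ Fintype.card ↥A := Matrix.rank_le_card_width M
  rw [hMM, hrank1] at hle1
  have : (F.erase A).card ≤ A.card := by
    rw [← Fintype.card_coe (F.erase A), ← Fintype.card_coe A]; exact hle1.trans hle2
  rwa [Finset.card_erase_of_mem hA] at this
end
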